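/- arXiv:0906.1957 — 6 statements merged into one kernel-verified Lean document; each statement's English description precedes it below -/
import Mathlib

section
/- Every sequence f : ℕ → ℂ satisfying f(n) = 1/(n! + 1) for all n ≥ 1 is not holonomic. -/
open Polynomial Filter Finset


lemma aux_tendsto_pow_div_factorial (K : ℕ) :
    Tendsto (fun n : ℕ => (n : ℝ) ^ K / (n.factorial : ℝ)) atTop (nhds 0) := by
  apply squeeze_zero (fun n => by positivity) (g := fun n : ℕ => ((2:ℝ)^K) ^ n / n.factorial)
  · intro n
    gcongr
    calc (n:ℝ)^K ≤ ((2:ℝ)^n)^K :=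
          pow_le_pow_left₀ (Nat.cast_nonneg n) (by exact_mod_cast (Nat.lt_two_pow_self (n := n)).le) K
      _ = ((2:ℝ)^K)^n := by rw [← pow_mul, ← pow_mul, mul_comm]
  · exact FloorSemiring.tendsto_pow_div_factorial_atTop _

lemma aux_factorial_add_le (n d : ℕ) : (n + d).factorial ≤ n.factorial * (n + d) ^ d := by
  induction d with
  | zero => simp
  | succ d ih =>
      have : n + (d+1) = (n + d) + 1 := by ring
      rw [this, Nat.factorial_succ, pow_succ]
      calc (n + d + 1) * (n + d).factorial ≤ (n + d + 1) * (n.factorial * (n+d)^d) :=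
            Nat.mul_le_mul_left _ ih
        _ ≤ (n + d + 1) * (n.factorial * (n+d+1)^d) := by
            apply Nat.mul_le_mul_left; apply Nat.mul_le_mul_left
            exact Nat.pow_le_pow_left (Nat.le_succ _) _
        _ = n.factorial * ((n + d + 1) ^ d * (n + d + 1)) := by ring

lemma aux_poly_norm_bound (p : Polynomial ℂ) :
    ∃ C : ℝ, 0 ≤ C ∧ ∀ n : ℕ, 1 ≤ n → ‖p.eval (n:ℂ)‖ ≤ C * (n:ℝ) ^ p.natDegree := by
  refine ⟨∑ i ∈ Finset.range (p.natDegree + 1), ‖p.coeff i‖,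
    Finset.sum_nonneg (fun i _ => norm_nonneg _), fun n hn => ?_⟩
  rw [Polynomial.eval_eq_sum_range, Finset.sum_mul]
  refine (norm_sum_le _ _).trans (Finset.sum_le_sum fun i hi => ?_)
  rw [norm_mul, norm_pow]
  simp only [Complex.norm_natCast]
  have h1 : (1:ℝ) ≤ (n:ℝ) := by exact_mod_cast hn
  have h2 : i ≤ p.natDegree := Nat.lt_succ_iff.mp (Finset.mem_range.mp hi)
  exact mul_le_mul_of_nonneg_left (pow_le_pow_right₀ h1 h2) (norm_nonneg _)

lemma aux_eval_nat_zero (Q : Polynomial ℂ) (h : ∀ n : ℕ, Q.eval (n:ℂ) = 0) : Q = 0 := by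
  refine Q.eq_zero_of_infinite_isRoot ?_
  exact Set.infinite_of_injective_forall_mem (f := fun n : ℕ => (n:ℂ))
    Nat.cast_injective (fun n => h n)

lemma aux_poly_zero_of_tendsto_aux :
    ∀ (m : ℕ) (Q : Polynomial ℂ), Q.natDegree ≤ m →
      Tendsto (fun n : ℕ => Q.eval (n : ℂ)) atTop (nhds 0) → Q = 0 := by
  intro m
  induction m with
  | zero =>
      intro Q hdeg h
      have hQ : Q = C (Q.coeff 0) := Polynomial.eq_C_of_natDegree_le_zero hdeg
      have hc : Q.coeff 0 = 0 := by
        refine tendsto_nhds_unique ?_ h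
        rw [hQ] at h ⊢
        simpa using (tendsto_const_nhds : Tendsto (fun _ : ℕ => Q.coeff 0) atTop _)
      rw [hQ, hc, map_zero]
  | succ m ih =>
      intro Q hdeg h
      by_cases hd0 : Q.natDegree ≤ m
      · exact ih Q hd0 h
      by_cases hQ0 : Q = 0
      · exact hQ0
      have hq1 : (X + C 1 : Polynomial ℂ).natDegree = 1 := by
        simpa using Polynomial.natDegree_X_add_C (1:ℂ)
      have hcompdeg : (Q.comp (X + C 1)).natDegree = Q.natDegree := by
        rw [Polynomial.natDegree_comp, hq1, mul_one]
      have hcomp0 : Q.comp (X + C 1) ≠ 0 := by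
        intro hc
        rcases Polynomial.comp_eq_zero_iff.mp hc with h1 | ⟨_, h2⟩
        · exact hQ0 h1
        · have h3 : (1:ℕ) = 0 := by rw [← hq1, h2]; simp
          exact one_ne_zero h3
      have hlc : (Q.comp (X + C 1)).leadingCoeff = Q.leadingCoeff := by
        rw [Polynomial.leadingCoeff_comp (by rw [hq1]; exact one_ne_zero)]
        have h1 : (X + C 1 : Polynomial ℂ).leadingCoeff = 1 := Polynomial.monic_X_add_C (1:ℂ)
        rw [h1, one_pow, mul_one]
      have hdeq : (Q.comp (X + C 1)).degree = Q.degree := by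
        rw [Polynomial.degree_eq_natDegree hcomp0, Polynomial.degree_eq_natDegree hQ0, hcompdeg]
      have hlt : (Q.comp (X + C 1) - Q).degree < Q.degree := by
        have := Polynomial.degree_sub_lt hdeq hcomp0 hlc
        rwa [hdeq] at this
      -- tendsto for the difference
      have hshift : Tendsto (fun n : ℕ => Q.eval (((n+1 : ℕ)):ℂ)) atTop (nhds 0) :=
        h.comp (tendsto_add_atTop_nat 1)
      have hdiff : Tendsto (fun n : ℕ => (Q.comp (X + C 1) - Q).eval (n:ℂ)) atTop (nhds 0) := by
        have := hshift.sub h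
        rw [sub_zero] at this
        refine this.congr fun n => ?_
        simp [Polynomial.eval_comp]
      have hQ' : Q.comp (X + C 1) - Q = 0 := by
        by_cases hz : Q.comp (X + C 1) - Q = 0
        · exact hz
        · refine ih _ ?_ hdiff
          have := Polynomial.natDegree_lt_natDegree hz hlt
          omega
      have hcomp : Q.comp (X + C 1) = Q := by
        have := sub_eq_zero.mp hQ'
        exact this
      have hconst : ∀ n : ℕ, Q.eval (n:ℂ) = Q.eval 0 := by
        intro n
        induction n with
        | zero => simp
        | succ n ihn =>
            have := congrArg (Polynomial.eval (n:ℂ)) hcomp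
            rw [Polynomial.eval_comp] at this
            simp at this
            rw [← ihn, ← this]
            push_cast
            ring_nf
      have h0 : Q.eval 0 = 0 := by
        refine tendsto_nhds_unique ?_ h
        refine (tendsto_const_nhds : Tendsto (fun _ : ℕ => Q.eval 0) atTop _).congr fun n => ?_
        rw [hconst n]
      exact aux_eval_nat_zero Q fun n => by rw [hconst n, h0]

lemma aux_poly_zero_of_tendsto (Q : Polynomial ℂ)
    (h : Tendsto (fun n : ℕ => Q.eval (n : ℂ)) atTop (nhds 0)) : Q = 0 :=
  aux_poly_zero_of_tendsto_aux Q.natDegree Q le_rfl h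

def auxC (d k n : ℕ) : ℕ := ∏ j ∈ Finset.Ico (k+1) (d+1), (n + j)

lemma auxC_mul_factorial {d k : ℕ} (n : ℕ) (hk : k ≤ d) :
    auxC d k n * (n + k).factorial = (n + d).factorial := by
  have h1 : auxC d k n = ∏ i ∈ Finset.Ico (n + k + 1) (n + d + 1), i := by
    rw [auxC, Finset.prod_Ico_add (fun x => x) (k+1) (d+1) n,
      show k+1+n = n+k+1 from by omega, show d+1+n = n+d+1 from by omega]
  rw [h1, ← Finset.prod_Ico_id_eq_factorial (n + k), ← Finset.prod_Ico_id_eq_factorial (n + d),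
    mul_comm]
  exact Finset.prod_Ico_consecutive _ (by omega) (by omega)

lemma auxC_pos (d k n : ℕ) : 1 ≤ auxC d k n :=
  Finset.one_le_prod' fun j hj => by
    have := (Finset.mem_Ico.mp hj).1; omega

lemma auxC_step {d k : ℕ} (n : ℕ) (hk : k < d) :
    auxC d k n = (n + (k + 1)) * auxC d (k + 1) n := by
  rw [auxC, Finset.prod_eq_prod_Ico_succ_bot (by omega)]
  rfl

lemma auxC_strict_anti {d : ℕ} (n : ℕ) (hn : 1 ≤ n) :
    ∀ j, ∀ i < j, j ≤ d → auxC d j n < auxC d i n := by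
  intro j
  induction j with
  | zero => omega
  | succ j ih =>
      intro i hij hjd
      have hstep : auxC d (j+1) n < auxC d j n := by
        conv_rhs => rw [auxC_step n (show j < d by omega)]
        have hp := auxC_pos d (j+1) n
        calc auxC d (j+1) n < 2 * auxC d (j+1) n := by omega
          _ ≤ (n + (j+1)) * auxC d (j+1) n := Nat.mul_le_mul_right _ (by omega)
      rcases Nat.lt_or_ge i j with h | h
      · exact hstep.trans (ih i h (by omega))
      · have : i = j := by omega
        rw [this]; exact hstep

lemma aux_eval_eventually_zero (Q : Polynomial ℂ) (M : ℕ)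
    (h : ∀ n : ℕ, M ≤ n → Q.eval (n:ℂ) = 0) : Q = 0 := by
  refine Q.eq_zero_of_infinite_isRoot ?_
  refine Set.infinite_of_injective_forall_mem (f := fun n : ℕ => ((n + M : ℕ) : ℂ)) ?_ ?_
  · intro a b hab
    have : a + M = b + M := Nat.cast_injective hab
    omega
  · intro n
    exact h (n + M) (by omega)

/-- A sequence `f : ℕ → ℂ` is *holonomic* (P-recursive) if there exist `d ∈ ℕ`,
polynomials `p_0, …, p_d ∈ ℂ[X]`, not all zero, and `N ∈ ℕ` such that
`∑_{k=0}^d p_k(n) · f(n+k) = 0` for all `n ≥ N`. -/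
def IsHolonomic (f : ℕ → ℂ) : Prop :=
  ∃ (d N : ℕ) (p : Fin (d + 1) → Polynomial ℂ),
    (∃ k, p k ≠ 0) ∧
    ∀ n : ℕ, N ≤ n → ∑ k : Fin (d + 1), (p k).eval (n : ℂ) * f (n + (k : ℕ)) = 0

/-- Every sequence `f : ℕ → ℂ` satisfying `f(n) = 1/(n! + 1)` for all `n ≥ 1`
is not holonomic. -/
theorem one_div_factorial_add_one_not_holonomic
    (f : ℕ → ℂ) (hf : ∀ n : ℕ, 1 ≤ n → f n = 1 / ((n.factorial : ℂ) + 1)) :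
    ¬ IsHolonomic f := by
  rintro ⟨d, N, p, ⟨k0, hk0⟩, hrec⟩
  set M := N + 1 with hM
  -- abbreviations
  set x : Fin (d+1) → ℕ → ℂ := fun k n => ((n + (k:ℕ)).factorial : ℂ) with hxdef
  have hx0 : ∀ (k : Fin (d+1)) (n : ℕ), x k n ≠ 0 := fun k n =>
    Nat.cast_ne_zero.mpr (Nat.factorial_ne_zero _)
  have hx1 : ∀ (k : Fin (d+1)) (n : ℕ), x k n + 1 ≠ 0 := by
    intro k n
    have : x k n + 1 = (((n + (k:ℕ)).factorial + 1 : ℕ) : ℂ) := by push_cast; ring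
    rw [this]
    exact Nat.cast_ne_zero.mpr (by positivity)
  set T : ℕ → ℕ → ℂ := fun m n =>
    ∑ k : Fin (d+1), (p k).eval (n:ℂ) / ((x k n)^m * (x k n + 1)) with hTdef
  -- cast identity for auxC
  have hcx : ∀ (k : Fin (d+1)) (n : ℕ), (auxC d (k:ℕ) n : ℂ) * x k n = ((n+d).factorial : ℂ) := by
    intro k n
    show (auxC d (k:ℕ) n : ℂ) * ((n + (k:ℕ)).factorial : ℂ) = ((n+d).factorial : ℂ)
    exact_mod_cast congrArg (Nat.cast : ℕ → ℂ) (auxC_mul_factorial n (Nat.lt_succ_iff.mp k.isLt))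
  -- base case
  have hT0 : ∀ n : ℕ, M ≤ n → T 0 n = 0 := by
    intro n hn
    rw [← hrec n (by omega)]
    refine Finset.sum_congr rfl fun k _ => ?_
    rw [hf (n + (k:ℕ)) (by omega), pow_zero, one_mul, mul_one_div]
  -- splitting identity
  have hsplit : ∀ (m n : ℕ),
      T m n = (∑ k : Fin (d+1), (p k).eval (n:ℂ) / (x k n)^(m+1)) - T (m+1) n := by
    intro m n
    rw [hTdef, ← Finset.sum_sub_distrib]
    refine Finset.sum_congr rfl fun k _ => ?_
    have h0 := hx0 k n
    have h1 := hx1 k n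
    field_simp
    ring
  -- polynomial R for each m, and its eval
  set CP : Fin (d+1) → Polynomial ℂ :=
    fun k => ∏ j ∈ Finset.Ico ((k:ℕ)+1) (d+1), (X + C (j:ℂ)) with hCPdef
  have hCPeval : ∀ (k : Fin (d+1)) (n : ℕ), (CP k).eval (n:ℂ) = (auxC d (k:ℕ) n : ℂ) := by
    intro k n
    rw [hCPdef]
    simp only [Polynomial.eval_prod, Polynomial.eval_add, Polynomial.eval_X, Polynomial.eval_C,
      auxC, Nat.cast_prod, Nat.cast_add]
  -- the S-sum as polynomial value
  have hSR : ∀ (m n : ℕ),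
      (∑ k : Fin (d+1), (p k).eval (n:ℂ) / (x k n)^(m+1)) * ((n+d).factorial : ℂ)^(m+1)
        = ∑ k : Fin (d+1), (p k).eval (n:ℂ) * (auxC d (k:ℕ) n : ℂ)^(m+1) := by
    intro m n
    rw [Finset.sum_mul]
    refine Finset.sum_congr rfl fun k _ => ?_
    have h0 := hx0 k n
    have hc := hcx k n
    field_simp
    rw [← hc]
    ring
  -- polynomial-norm machinery
  choose Bf hBf0 hBf using fun k : Fin (d+1) => aux_poly_norm_bound (p k)
  set B : ℝ := ∑ k : Fin (d+1), Bf k with hBdef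
  have hB0 : 0 ≤ B := Finset.sum_nonneg fun k _ => hBf0 k
  set Dg : ℕ := Finset.univ.sup (fun k : Fin (d+1) => (p k).natDegree) with hDgdef
  have hsumB : ∀ n : ℕ, 1 ≤ n →
      (∑ k : Fin (d+1), ‖(p k).eval (n:ℂ)‖) ≤ B * (n:ℝ)^Dg := by
    intro n hn
    rw [hBdef, Finset.sum_mul]
    refine Finset.sum_le_sum fun k _ => (hBf k n hn).trans ?_
    have h1 : (1:ℝ) ≤ (n:ℝ) := by exact_mod_cast hn
    exact mul_le_mul_of_nonneg_left
      (pow_le_pow_right₀ h1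
        (Finset.le_sup (f := fun k : Fin (d+1) => (p k).natDegree) (Finset.mem_univ k)))
      (hBf0 k)
  -- main induction
  have hTall : ∀ m : ℕ, ∀ n : ℕ, M ≤ n → T m n = 0 := by
    intro m
    induction m with
    | zero => exact hT0
    | succ m ih =>
        set R : Polynomial ℂ := ∑ k : Fin (d+1), p k * (CP k)^(m+1) with hRdef
        have hReval : ∀ n : ℕ, (R.eval (n:ℂ))
            = (∑ k : Fin (d+1), (p k).eval (n:ℂ) / (x k n)^(m+1)) * ((n+d).factorial : ℂ)^(m+1) := by
          intro n
          rw [hSR, hRdef]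
          simp only [Polynomial.eval_finset_sum, Polynomial.eval_mul, Polynomial.eval_pow]
          exact Finset.sum_congr rfl fun k _ => by rw [hCPeval]
        have hReval' : ∀ n : ℕ, M ≤ n →
            R.eval (n:ℂ) = T (m+1) n * ((n+d).factorial : ℂ)^(m+1) := by
          intro n hn
          rw [hReval n]
          congr 1
          have := hsplit m n
          rw [ih n hn] at this
          linear_combination -this
        -- norm bound
        have hbound : ∀ n : ℕ, max M d ≤ n →
            ‖R.eval (n:ℂ)‖ ≤ (B * 2^(d*(m+1))) * (n:ℝ)^(Dg + d*(m+1)) / (n.factorial : ℝ) := by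
          intro n hn
          have hnM : M ≤ n := le_trans (le_max_left _ _) hn
          have hnd : d ≤ n := le_trans (le_max_right _ _) hn
          have hn1 : 1 ≤ n := by omega
          have hfacpos : (0:ℝ) < (n.factorial : ℝ) := by exact_mod_cast n.factorial_pos
          have hT1 : ‖T (m+1) n‖
              ≤ (B * (n:ℝ)^Dg) / ((n.factorial:ℝ)^(m+1) * ((n.factorial:ℝ) + 1)) := by
            calc ‖T (m+1) n‖
                ≤ ∑ k : Fin (d+1),
                  ‖(p k).eval (n:ℂ)‖ / ((n.factorial:ℝ)^(m+1) * ((n.factorial:ℝ) + 1)) := by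
                  rw [hTdef]
                  refine (norm_sum_le _ _).trans (Finset.sum_le_sum fun k _ => ?_)
                  rw [norm_div, norm_mul, norm_pow]
                  have hxn : ‖x k n‖ = ((n + (k:ℕ)).factorial : ℝ) := by
                    rw [hxdef]; exact Complex.norm_natCast _
                  have hxn1 : ‖x k n + 1‖ = ((n + (k:ℕ)).factorial : ℝ) + 1 := by
                    have : x k n + 1 = (((n + (k:ℕ)).factorial + 1 : ℕ) : ℂ) := by
                      rw [hxdef]; push_cast; ring
                    rw [this, Complex.norm_natCast]; push_cast; ring
                  rw [hxn, hxn1]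
                  have hfle : (n.factorial : ℝ) ≤ ((n + (k:ℕ)).factorial : ℝ) := by
                    exact_mod_cast Nat.factorial_le (Nat.le_add_right _ _)
                  gcongr
              _ = (∑ k : Fin (d+1), ‖(p k).eval (n:ℂ)‖)
                    / ((n.factorial:ℝ)^(m+1) * ((n.factorial:ℝ) + 1)) := by
                  rw [Finset.sum_div]
              _ ≤ _ := by
                  gcongr
                  exact hsumB n hn1
          have hfac2 : ((n+d).factorial : ℝ)^(m+1)
              ≤ ((n.factorial : ℝ) * (2*(n:ℝ))^d)^(m+1) := by
            gcongr
            have h1 : (n+d).factorial ≤ n.factorial * (2*n)^d := by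
              refine (aux_factorial_add_le n d).trans ?_
              exact Nat.mul_le_mul_left _ (Nat.pow_le_pow_left (by omega) _)
            exact_mod_cast h1
          calc ‖R.eval (n:ℂ)‖
              = ‖T (m+1) n‖ * ((n+d).factorial : ℝ)^(m+1) := by
                rw [hReval' n hnM, norm_mul, norm_pow, Complex.norm_natCast]
            _ ≤ ((B * (n:ℝ)^Dg) / ((n.factorial:ℝ)^(m+1) * ((n.factorial:ℝ) + 1)))
                  * (((n.factorial : ℝ) * (2*(n:ℝ))^d)^(m+1)) :=
                mul_le_mul hT1 hfac2 (by positivity) (by positivity)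
            _ = (B * 2^(d*(m+1))) * (n:ℝ)^(Dg + d*(m+1)) / ((n.factorial:ℝ) + 1) := by
                have h1 : ((n.factorial:ℝ)) ≠ 0 := ne_of_gt hfacpos
                have h2 : ((n.factorial:ℝ)) + 1 ≠ 0 := by positivity
                field_simp
                rw [pow_add, mul_pow]
                ring
            _ ≤ (B * 2^(d*(m+1))) * (n:ℝ)^(Dg + d*(m+1)) / (n.factorial : ℝ) := by
                gcongr <;> first | positivity | linarith
        have hRtend : Tendsto (fun n : ℕ => R.eval (n:ℂ)) atTop (nhds 0) := by
          refine squeeze_zero_norm'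
            (a := fun n : ℕ => (B * 2^(d*(m+1))) * (n:ℝ)^(Dg + d*(m+1)) / (n.factorial : ℝ)) ?_ ?_
          · exact (eventually_atTop.mpr ⟨max M d, hbound⟩ :)
          · have := (aux_tendsto_pow_div_factorial (Dg + d*(m+1))).const_mul
              (B * 2^(d*(m+1)))
            rw [mul_zero] at this
            refine this.congr fun n => ?_
            rw [mul_div_assoc]
        have hR0 : R = 0 := aux_poly_zero_of_tendsto R hRtend
        intro n hn
        have h1 : T (m+1) n * ((n+d).factorial : ℂ)^(m+1) = 0 := by
          rw [← hReval' n hn, hR0, Polynomial.eval_zero]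
        have h2 : ((n+d).factorial : ℂ)^(m+1) ≠ 0 :=
          pow_ne_zero _ (Nat.cast_ne_zero.mpr (Nat.factorial_ne_zero _))
        exact (mul_eq_zero.mp h1).resolve_right h2
  -- now extract the power sums
  have hS : ∀ n : ℕ, M ≤ n → ∀ m : ℕ,
      ∑ k : Fin (d+1), (p k).eval (n:ℂ) * (auxC d (k:ℕ) n : ℂ)^(m+1) = 0 := by
    intro n hn m
    rw [← hSR m n]
    have h1 := hsplit m n
    rw [hTall m n hn, hTall (m+1) n hn] at h1
    have h2 : (∑ k : Fin (d+1), (p k).eval (n:ℂ) / (x k n)^(m+1)) = 0 := by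
      linear_combination -h1
    rw [h2, zero_mul]
  -- Vandermonde step
  have hfinal : ∀ n : ℕ, M ≤ n → ∀ k : Fin (d+1), (p k).eval (n:ℂ) = 0 := by
    intro n hn k
    have hn1 : 1 ≤ n := by omega
    have hinj : Function.Injective (fun k : Fin (d+1) => ((auxC d (k:ℕ) n : ℂ))) := by
      intro a b hab
      have heq : auxC d (a:ℕ) n = auxC d (b:ℕ) n := Nat.cast_injective hab
      by_contra hne
      have hab' : (a:ℕ) ≠ (b:ℕ) := fun h => hne (Fin.ext h)
      rcases Nat.lt_or_ge (a:ℕ) (b:ℕ) with h | h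
      · have := auxC_strict_anti n hn1 (b:ℕ) (a:ℕ) h (Nat.lt_succ_iff.mp b.isLt)
        omega
      · have hba : (b:ℕ) < (a:ℕ) := by omega
        have := auxC_strict_anti n hn1 (a:ℕ) (b:ℕ) hba (Nat.lt_succ_iff.mp a.isLt)
        omega
    have hv := Matrix.eq_zero_of_forall_pow_sum_mul_pow_eq_zero
      (f := fun k : Fin (d+1) => ((auxC d (k:ℕ) n : ℂ)))
      (v := fun k : Fin (d+1) => (p k).eval (n:ℂ) * (auxC d (k:ℕ) n : ℂ)) hinj ?_
    · have := congrFun hv k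
      simp only [Pi.zero_apply] at this
      rcases mul_eq_zero.mp this with h | h
      · exact h
      · exact absurd h (Nat.cast_ne_zero.mpr (by have := auxC_pos d (k:ℕ) n; omega))
    · intro i
      have := hS n hn (i:ℕ)
      rw [← this]
      refine Finset.sum_congr rfl fun j _ => ?_
      rw [mul_assoc, ← pow_succ']
  -- conclude
  exact hk0 (aux_eval_eventually_zero (p k0) M (fun n hn => hfinal n hn k0))
end

section
/- Every sequence f : ℕ → ℂ satisfying f(n) = Γ(n·√2) for all n ≥ 1, where Γ is the Gamma function evaluated at the positive real number n√2, is not holonomic. -/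
open Real Polynomial Filter

lemma wendel_upper01 {x s : ℝ} (hx : 1 ≤ x) (hs : 0 ≤ s) (hs1 : s ≤ 1) :
    Real.Gamma (x + s) ≤ x ^ s * Real.Gamma x := by
  have hx0 : (0:ℝ) < x := lt_of_lt_of_le one_pos hx
  have hΓx : 0 < Real.Gamma x := Real.Gamma_pos_of_pos hx0
  have hΓxs : 0 < Real.Gamma (x + s) := Real.Gamma_pos_of_pos (by linarith)
  have key := Real.convexOn_log_Gamma.2 (Set.mem_Ioi.mpr hx0)
      (Set.mem_Ioi.mpr (by linarith : (0:ℝ) < x + 1)) (by linarith : (0:ℝ) ≤ 1 - s) hs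
      (by ring)
  simp only [smul_eq_mul, Function.comp_apply] at key
  have harg : (1 - s) * x + s * (x + 1) = x + s := by ring
  rw [harg] at key
  have hΓ1 : Real.Gamma (x + 1) = x * Real.Gamma x := Real.Gamma_add_one hx0.ne'
  rw [hΓ1, Real.log_mul hx0.ne' hΓx.ne'] at key
  have key2 : Real.log (Real.Gamma (x + s)) ≤ Real.log (Real.Gamma x) + s * Real.log x := by
    nlinarith [key]
  calc Real.Gamma (x + s) = Real.exp (Real.log (Real.Gamma (x + s))) := (Real.exp_log hΓxs).symm
    _ ≤ Real.exp (Real.log (Real.Gamma x) + s * Real.log x) := Real.exp_le_exp.mpr key2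
    _ = x ^ s * Real.Gamma x := by
        rw [Real.exp_add, Real.exp_log hΓx, Real.rpow_def_of_pos hx0, mul_comm (Real.log x) s,
          mul_comm]

lemma wendel_lower01 {x s : ℝ} (hx : 1 ≤ x) (hs : 0 ≤ s) (hs1 : s ≤ 1) :
    x ^ s * Real.Gamma x ≤ 2 * Real.Gamma (x + s) := by
  have hx0 : (0:ℝ) < x := lt_of_lt_of_le one_pos hx
  have hxs0 : (0:ℝ) < x + s := by linarith
  have hΓx : 0 < Real.Gamma x := Real.Gamma_pos_of_pos hx0
  have hΓxs : 0 < Real.Gamma (x + s) := Real.Gamma_pos_of_pos hxs0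
  -- convexity: x+1 = s*(x+s) + (1-s)*(x+s+1)
  have key := Real.convexOn_log_Gamma.2 (Set.mem_Ioi.mpr hxs0)
      (Set.mem_Ioi.mpr (by linarith : (0:ℝ) < x + s + 1)) hs (by linarith : (0:ℝ) ≤ 1 - s)
      (by ring)
  simp only [smul_eq_mul, Function.comp_apply] at key
  have harg : s * (x + s) + (1 - s) * (x + s + 1) = x + 1 := by ring
  rw [harg] at key
  have hΓ1 : Real.Gamma (x + 1) = x * Real.Gamma x := Real.Gamma_add_one hx0.ne'
  have hΓ2 : Real.Gamma (x + s + 1) = (x + s) * Real.Gamma (x + s) :=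
    Real.Gamma_add_one hxs0.ne'
  rw [hΓ1, hΓ2, Real.log_mul hx0.ne' hΓx.ne', Real.log_mul hxs0.ne' hΓxs.ne'] at key
  -- key : log x + log Γ x ≤ s * log Γ(x+s) + (1-s) * (log (x+s) + log Γ(x+s))
  have hlogq : Real.log (x + s) - Real.log x ≤ Real.log 2 := by
    have h1 : Real.log (x + s) ≤ Real.log (2 * x) :=
      Real.log_le_log hxs0 (by linarith)
    rw [Real.log_mul two_ne_zero hx0.ne'] at h1
    linarith
  have hlogq0 : Real.log x ≤ Real.log (x + s) := Real.log_le_log hx0 (by linarith)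
  have key2 : s * Real.log x + Real.log (Real.Gamma x) ≤
      Real.log 2 + Real.log (Real.Gamma (x + s)) := by
    nlinarith [key, hlogq, hlogq0]
  calc x ^ s * Real.Gamma x
      = Real.exp (s * Real.log x + Real.log (Real.Gamma x)) := by
        rw [Real.exp_add, Real.exp_log hΓx, Real.rpow_def_of_pos hx0, mul_comm (Real.log x) s]
    _ ≤ Real.exp (Real.log 2 + Real.log (Real.Gamma (x + s))) := Real.exp_le_exp.mpr key2
    _ = 2 * Real.Gamma (x + s) := by
        rw [Real.exp_add, Real.exp_log hΓxs, Real.exp_log two_pos]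

lemma wendel_aux (m : ℕ) : ∀ s : ℝ, 0 ≤ s → s ≤ m + 1 → ∃ C : ℝ, 0 < C ∧ ∀ x : ℝ, 1 ≤ x →
    Real.Gamma (x + s) ≤ C * (x ^ s * Real.Gamma x) ∧
    x ^ s * Real.Gamma x ≤ C * Real.Gamma (x + s) := by
  induction m with
  | zero =>
    intro s hs hs1
    refine ⟨2, two_pos, fun x hx => ?_⟩
    push_cast at hs1
    constructor
    · have := wendel_upper01 hx hs (by linarith)
      have hx0 : (0:ℝ) < x := lt_of_lt_of_le one_pos hx
      nlinarith [Real.rpow_pos_of_pos hx0 s, Real.Gamma_pos_of_pos hx0]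
    · exact wendel_lower01 hx hs (by linarith)
  | succ m ih =>
    intro s hs hs1
    by_cases hsm : s ≤ m + 1
    · exact ih s hs hsm
    push_neg at hsm
    have hm : (0:ℝ) ≤ (m:ℝ) := Nat.cast_nonneg m
    have hs1' : (1:ℝ) ≤ s := by linarith
    obtain ⟨C, hC, hWC⟩ := ih (s - 1) (by linarith) (by push_cast at hs1 ⊢; linarith)
    refine ⟨C * (1 + s), by positivity, fun x hx => ?_⟩
    have hx0 : (0:ℝ) < x := lt_of_lt_of_le one_pos hx
    have hΓx : 0 < Real.Gamma x := Real.Gamma_pos_of_pos hx0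
    obtain ⟨hu, hl⟩ := hWC x hx
    have hpos1 : 0 < Real.Gamma (x + (s - 1)) := Real.Gamma_pos_of_pos (by linarith)
    have hfe : Real.Gamma (x + s) = (x + (s - 1)) * Real.Gamma (x + (s - 1)) := by
      have : x + s = (x + (s - 1)) + 1 := by ring
      rw [this, Real.Gamma_add_one (by intro h; nlinarith : x + (s-1) ≠ 0)]
    have hrp : x ^ s = x ^ (s - 1) * x := by
      rw [← Real.rpow_add_one hx0.ne' (s - 1)]; ring_nf
    have hrpos : 0 < x ^ (s - 1) := Real.rpow_pos_of_pos hx0 _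
    constructor
    · -- Γ(x+s) = (x+s-1) Γ(x+s-1) ≤ (x+s-1) C x^{s-1} Γx ≤ C(1+s) x^s Γ x
      rw [hfe, hrp]
      have h1 : (x + (s - 1)) * Real.Gamma (x + (s - 1)) ≤
          (x + (s - 1)) * (C * (x ^ (s - 1) * Real.Gamma x)) :=
        mul_le_mul_of_nonneg_left hu (by linarith)
      have h2 : x + (s - 1) ≤ (1 + s) * x := by nlinarith
      nlinarith [mul_le_mul_of_nonneg_right h2
        (le_of_lt (by positivity : (0:ℝ) < C * (x ^ (s - 1) * Real.Gamma x)))]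
    · rw [hfe, hrp]
      have h2 : x ≤ x + (s - 1) := by linarith
      have h1 : x ^ (s - 1) * Real.Gamma x * x ≤ C * Real.Gamma (x + (s - 1)) * (x + (s - 1)) := by
        have := mul_le_mul hl h2 hx0.le (by positivity)
        linarith
      nlinarith [mul_pos (mul_pos hC hpos1) (show (0:ℝ) < x + (s-1) by linarith)]

lemma wendel {s : ℝ} (hs : 0 ≤ s) : ∃ C : ℝ, 0 < C ∧ ∀ x : ℝ, 1 ≤ x →
    Real.Gamma (x + s) ≤ C * (x ^ s * Real.Gamma x) ∧
    x ^ s * Real.Gamma x ≤ C * Real.Gamma (x + s) :=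
  wendel_aux ⌈s⌉₊ s hs (le_trans (Nat.le_ceil s) (by linarith))

lemma one_le_sqrt_two : (1:ℝ) ≤ Real.sqrt 2 := by
  nlinarith [Real.sq_sqrt (by norm_num : (0:ℝ) ≤ 2), Real.sqrt_nonneg 2]

/-- Gamma ratio bound: `Γ((n+k)√2) ≤ C n^{√2 k - √2 K} Γ((n+K)√2)` -/
lemma gamma_ratio (k K : ℕ) : ∃ C : ℝ, 0 < C ∧ ∀ n : ℕ, 1 ≤ n →
    Real.Gamma (((n:ℝ) + k) * Real.sqrt 2) ≤
      C * (n:ℝ) ^ (Real.sqrt 2 * k - Real.sqrt 2 * K) *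
        Real.Gamma (((n:ℝ) + K) * Real.sqrt 2) := by
  have hsq := one_le_sqrt_two
  rcases le_or_gt K k with hKk | hkK
  · -- K ≤ k : upper Wendel with x = (n+K)√2, s = √2(k-K)
    set s : ℝ := Real.sqrt 2 * k - Real.sqrt 2 * K with hsdef
    have hs0 : 0 ≤ s := by
      have : (K:ℝ) ≤ k := Nat.cast_le.mpr hKk
      nlinarith
    obtain ⟨C, hC, hW⟩ := wendel hs0
    refine ⟨C * ((1 + K) * Real.sqrt 2) ^ s, by positivity, fun n hn => ?_⟩
    have hn1 : (1:ℝ) ≤ (n:ℝ) := by exact_mod_cast hn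
    have hx1 : (1:ℝ) ≤ ((n:ℝ) + K) * Real.sqrt 2 := by nlinarith [Nat.cast_nonneg (α := ℝ) K]
    have hx0 : (0:ℝ) < ((n:ℝ) + K) * Real.sqrt 2 := by linarith
    have harg : ((n:ℝ) + k) * Real.sqrt 2 = ((n:ℝ) + K) * Real.sqrt 2 + s := by
      rw [hsdef]; ring
    have hup := (hW _ hx1).1
    rw [← harg] at hup
    have hΓ : 0 < Real.Gamma (((n:ℝ) + K) * Real.sqrt 2) := Real.Gamma_pos_of_pos hx0
    have hxle : ((n:ℝ) + K) * Real.sqrt 2 ≤ (1 + K) * Real.sqrt 2 * n := by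
      nlinarith [mul_nonneg (mul_nonneg (Nat.cast_nonneg (α := ℝ) K)
        (sub_nonneg.mpr hn1)) (Real.sqrt_nonneg 2)]
    have hrle : (((n:ℝ) + K) * Real.sqrt 2) ^ s ≤ ((1 + K) * Real.sqrt 2 * n) ^ s :=
      Real.rpow_le_rpow hx0.le hxle hs0
    have hmr : ((1 + K) * Real.sqrt 2 * (n:ℝ)) ^ s = ((1 + K) * Real.sqrt 2) ^ s * (n:ℝ) ^ s :=
      Real.mul_rpow (by positivity) (by linarith)
    calc Real.Gamma (((n:ℝ) + k) * Real.sqrt 2)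
        ≤ C * ((((n:ℝ) + K) * Real.sqrt 2) ^ s * Real.Gamma (((n:ℝ) + K) * Real.sqrt 2)) := hup
      _ ≤ C * (((1 + K) * Real.sqrt 2) ^ s * (n:ℝ) ^ s *
            Real.Gamma (((n:ℝ) + K) * Real.sqrt 2)) := by
          rw [← hmr]
          exact mul_le_mul_of_nonneg_left (mul_le_mul_of_nonneg_right hrle hΓ.le) hC.le
      _ = C * ((1 + K) * Real.sqrt 2) ^ s * (n:ℝ) ^ s *
            Real.Gamma (((n:ℝ) + K) * Real.sqrt 2) := by ring
  · -- k < K : lower Wendel with x = (n+k)√2, s = √2(K-k)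
    set s : ℝ := Real.sqrt 2 * K - Real.sqrt 2 * k with hsdef
    have hs0 : 0 ≤ s := by
      have : (k:ℝ) ≤ K := Nat.cast_le.mpr hkK.le
      nlinarith
    obtain ⟨C, hC, hW⟩ := wendel hs0
    refine ⟨C, hC, fun n hn => ?_⟩
    have hn1 : (1:ℝ) ≤ (n:ℝ) := by exact_mod_cast hn
    have hx1 : (1:ℝ) ≤ ((n:ℝ) + k) * Real.sqrt 2 := by nlinarith [Nat.cast_nonneg (α := ℝ) k]
    have hx0 : (0:ℝ) < ((n:ℝ) + k) * Real.sqrt 2 := by linarith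
    have harg : ((n:ℝ) + K) * Real.sqrt 2 = ((n:ℝ) + k) * Real.sqrt 2 + s := by
      rw [hsdef]; ring
    have hlo := (hW _ hx1).2
    rw [← harg] at hlo
    -- n^s Γ(x) ≤ x^s Γ(x) ≤ C Γ(Y)
    have hΓ : 0 < Real.Gamma (((n:ℝ) + k) * Real.sqrt 2) := Real.Gamma_pos_of_pos hx0
    have hnle : (n:ℝ) ≤ ((n:ℝ) + k) * Real.sqrt 2 := by nlinarith [Nat.cast_nonneg (α := ℝ) k]
    have hrle : (n:ℝ) ^ s ≤ (((n:ℝ) + k) * Real.sqrt 2) ^ s :=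
      Real.rpow_le_rpow (by linarith) hnle hs0
    have hns : (0:ℝ) < (n:ℝ) ^ s := Real.rpow_pos_of_pos (by linarith) s
    have key : (n:ℝ) ^ s * Real.Gamma (((n:ℝ) + k) * Real.sqrt 2) ≤
        C * Real.Gamma (((n:ℝ) + K) * Real.sqrt 2) := by
      calc (n:ℝ) ^ s * Real.Gamma (((n:ℝ) + k) * Real.sqrt 2)
          ≤ (((n:ℝ) + k) * Real.sqrt 2) ^ s * Real.Gamma (((n:ℝ) + k) * Real.sqrt 2) :=
            mul_le_mul_of_nonneg_right hrle hΓ.le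
        _ ≤ C * Real.Gamma (((n:ℝ) + K) * Real.sqrt 2) := hlo
    have hexp : Real.sqrt 2 * k - Real.sqrt 2 * K = -s := by rw [hsdef]; ring
    rw [hexp, Real.rpow_neg (by linarith : (0:ℝ) ≤ (n:ℝ))]
    rw [mul_comm ((n:ℝ) ^ s) _] at key
    calc Real.Gamma (((n:ℝ) + k) * Real.sqrt 2)
        = Real.Gamma (((n:ℝ) + k) * Real.sqrt 2) * (n:ℝ) ^ s * ((n:ℝ) ^ s)⁻¹ := by
          field_simp
      _ ≤ C * Real.Gamma (((n:ℝ) + K) * Real.sqrt 2) * ((n:ℝ) ^ s)⁻¹ :=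
          mul_le_mul_of_nonneg_right key (by positivity)
      _ = C * ((n:ℝ) ^ s)⁻¹ * Real.Gamma (((n:ℝ) + K) * Real.sqrt 2) := by ring

lemma poly_upper (p : Polynomial ℂ) : ∃ C : ℝ, 0 < C ∧ ∀ n : ℕ, 1 ≤ n →
    ‖p.eval (n:ℂ)‖ ≤ C * (n:ℝ) ^ ((p.natDegree : ℝ)) := by
  refine ⟨(∑ i ∈ Finset.range (p.natDegree + 1), ‖p.coeff i‖) + 1, by positivity, fun n hn => ?_⟩
  have hn1 : (1:ℝ) ≤ (n:ℝ) := by exact_mod_cast hn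
  have hrw : (n:ℝ) ^ ((p.natDegree : ℝ)) = (n:ℝ) ^ p.natDegree := by
    rw [Real.rpow_natCast]
  rw [hrw, Polynomial.eval_eq_sum_range]
  calc ‖∑ i ∈ Finset.range (p.natDegree + 1), p.coeff i * (n:ℂ) ^ i‖
      ≤ ∑ i ∈ Finset.range (p.natDegree + 1), ‖p.coeff i * (n:ℂ) ^ i‖ := norm_sum_le _ _
    _ ≤ ∑ i ∈ Finset.range (p.natDegree + 1), ‖p.coeff i‖ * (n:ℝ) ^ p.natDegree := by
        refine Finset.sum_le_sum fun i hi => ?_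
        rw [norm_mul, norm_pow, Complex.norm_natCast]
        refine mul_le_mul_of_nonneg_left ?_ (norm_nonneg _)
        exact pow_le_pow_right₀ hn1 (Nat.lt_succ_iff.mp (Finset.mem_range.mp hi))
    _ = (∑ i ∈ Finset.range (p.natDegree + 1), ‖p.coeff i‖) * (n:ℝ) ^ p.natDegree := by
        rw [← Finset.sum_mul]
    _ ≤ ((∑ i ∈ Finset.range (p.natDegree + 1), ‖p.coeff i‖) + 1) * (n:ℝ) ^ p.natDegree := by
        have : (0:ℝ) < (n:ℝ) ^ p.natDegree := by positivity
        nlinarith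

lemma poly_lower (p : Polynomial ℂ) (hp : p ≠ 0) : ∃ c : ℝ, 0 < c ∧ ∃ M : ℕ, 1 ≤ M ∧
    ∀ n : ℕ, M ≤ n → c * (n:ℝ) ^ ((p.natDegree : ℝ)) ≤ ‖p.eval (n:ℂ)‖ := by
  set a : ℝ := ‖p.leadingCoeff‖ with ha
  have ha0 : 0 < a := by
    rw [ha, norm_pos_iff]
    exact Polynomial.leadingCoeff_ne_zero.mpr hp
  by_cases hdeg : p.natDegree = 0
  · obtain ⟨x, rfl⟩ := Polynomial.natDegree_eq_zero.mp hdeg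
    refine ⟨a, ha0, 1, le_refl 1, fun n hn => ?_⟩
    have hn1 : (1:ℝ) ≤ (n:ℝ) := by exact_mod_cast hn
    simp only [Polynomial.eval_C]
    have : ((Polynomial.C x).natDegree : ℝ) = 0 := by simp
    rw [this, Real.rpow_zero, mul_one, ha]
    simp [Polynomial.leadingCoeff]
  · obtain ⟨Ce, hCe, hCeb⟩ := poly_upper p.eraseLead
    have hde : p.eraseLead.natDegree ≤ p.natDegree - 1 := Polynomial.eraseLead_natDegree_le p
    set M : ℕ := max 1 (⌈2 * Ce / a⌉₊ + 1) with hM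
    refine ⟨a / 2, by positivity, M, le_max_left _ _, fun n hn => ?_⟩
    have hn1 : (1:ℝ) ≤ (n:ℝ) := by
      exact_mod_cast le_trans (le_max_left 1 _) hn
    have hn0 : (0:ℝ) < n := by linarith
    have hnC : 2 * Ce / a < (n:ℝ) := by
      have h1 : (⌈2 * Ce / a⌉₊ + 1 : ℕ) ≤ n := le_trans (le_max_right _ _) hn
      have h2 : 2 * Ce / a ≤ (⌈2 * Ce / a⌉₊ : ℝ) := Nat.le_ceil _
      have h3 : ((⌈2 * Ce / a⌉₊ : ℕ) : ℝ) + 1 ≤ (n:ℝ) := by exact_mod_cast h1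
      linarith
    -- p.eval = eraseLead.eval + lead * n ^ deg
    have hsplit : p.eval (n:ℂ) = p.eraseLead.eval (n:ℂ) +
        p.leadingCoeff * (n:ℂ) ^ p.natDegree := by
      conv_lhs => rw [← Polynomial.eraseLead_add_C_mul_X_pow p]
      rw [Polynomial.eval_add, Polynomial.eval_mul, Polynomial.eval_pow, Polynomial.eval_C,
        Polynomial.eval_X]
    have hlead : ‖p.leadingCoeff * (n:ℂ) ^ p.natDegree‖ = a * (n:ℝ) ^ p.natDegree := by
      rw [norm_mul, norm_pow, Complex.norm_natCast]
    have herase : ‖p.eraseLead.eval (n:ℂ)‖ ≤ Ce * (n:ℝ) ^ (p.natDegree - 1) := by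
      refine le_trans (hCeb n (by exact_mod_cast hn1)) ?_
      rw [Real.rpow_natCast]
      exact mul_le_mul_of_nonneg_left (pow_le_pow_right₀ hn1 hde) hCe.le
    have hnd : (n:ℝ) ^ p.natDegree = (n:ℝ) ^ (p.natDegree - 1) * n := by
      rw [← pow_succ, Nat.sub_add_cancel (Nat.one_le_iff_ne_zero.mpr hdeg)]
    have htri : a * (n:ℝ) ^ p.natDegree - ‖p.eraseLead.eval (n:ℂ)‖ ≤ ‖p.eval (n:ℂ)‖ := by
      rw [hsplit]
      calc a * (n:ℝ) ^ p.natDegree - ‖p.eraseLead.eval (n:ℂ)‖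
          = ‖p.leadingCoeff * (n:ℂ) ^ p.natDegree‖ - ‖p.eraseLead.eval (n:ℂ)‖ := by rw [hlead]
        _ ≤ ‖p.eraseLead.eval (n:ℂ) + p.leadingCoeff * (n:ℂ) ^ p.natDegree‖ := by
            have h := norm_add_le (p.eraseLead.eval (n:ℂ) +
              p.leadingCoeff * (n:ℂ) ^ p.natDegree) (-(p.eraseLead.eval (n:ℂ)))
            rw [show p.eraseLead.eval (n:ℂ) + p.leadingCoeff * (n:ℂ) ^ p.natDegree +
              -(p.eraseLead.eval (n:ℂ)) = p.leadingCoeff * (n:ℂ) ^ p.natDegree by ring,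
              norm_neg] at h
            linarith
    have hkey : Ce * (n:ℝ) ^ (p.natDegree - 1) ≤ (a / 2) * (n:ℝ) ^ p.natDegree := by
      rw [hnd]
      have hpow : (0:ℝ) < (n:ℝ) ^ (p.natDegree - 1) := by positivity
      have : 2 * Ce ≤ a * n := by
        rw [div_lt_iff₀ ha0] at hnC
        nlinarith
      nlinarith
    rw [Real.rpow_natCast]
    nlinarith [herase]

/-- Every sequence `f : ℕ → ℂ` satisfying `f(n) = Γ(n√2)` for all `n ≥ 1`
is not holonomic. -/
theorem gamma_sqrt_two_not_holonomic
    (f : ℕ → ℂ) (hf : ∀ n : ℕ, 1 ≤ n → f n = (Real.Gamma ((n : ℝ) * Real.sqrt 2) : ℂ)) :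
    ¬ IsHolonomic f := by
  rintro ⟨d, N, p, ⟨k₀, hk₀⟩, hrec⟩
  classical
  set S : Finset (Fin (d + 1)) := Finset.univ.filter (fun k => p k ≠ 0) with hS
  have hk₀S : k₀ ∈ S := by simp [hS, hk₀]
  set w : Fin (d + 1) → ℝ :=
    fun k => ((p k).natDegree : ℝ) + Real.sqrt 2 * (k : ℕ) with hw
  obtain ⟨K, hKS, hKmax⟩ := S.exists_max_image w ⟨k₀, hk₀S⟩
  have hKne : p K ≠ 0 := by
    have := hKS; rw [hS, Finset.mem_filter] at this; exact this.2
  -- strict domination of weights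
  have hstrict : ∀ k ∈ S, k ≠ K → w k < w K := by
    intro k hk hne
    refine lt_of_le_of_ne (hKmax k hk) (fun heq => ?_)
    have hb : (((K:ℕ):ℤ) - ((k:ℕ):ℤ)) ≠ 0 := by
      intro h
      apply hne
      have : ((k:ℕ):ℤ) = ((K:ℕ):ℤ) := by omega
      exact Fin.ext (by exact_mod_cast this)
    have hirr := (irrational_sqrt_two.intCast_mul hb).ne_int
      (((p k).natDegree : ℤ) - ((p K).natDegree : ℤ))
    apply hirr
    rw [hw] at heq
    simp only at heq
    push_cast
    nlinarith [heq]
  obtain ⟨c, hc, M, hM1, hlo⟩ := poly_lower (p K) hKne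
  choose Cu hCu hCub using fun k : Fin (d + 1) => poly_upper (p k)
  choose Cg hCg hCgb using fun k : Fin (d + 1) => gamma_ratio (k : ℕ) (K : ℕ)
  set ε : ℝ := 1 / (2 * (d + 1)) with hε
  have hε0 : 0 < ε := by rw [hε]; positivity
  -- eventual smallness of ratio coefficients
  have hPk : ∀ k : Fin (d + 1), ∀ᶠ n : ℕ in atTop,
      (k ∈ S → k ≠ K → (Cu k * Cg k / c) * (n:ℝ) ^ (w k - w K) ≤ ε) := by
    intro k
    by_cases hkS : k ∈ S ∧ k ≠ K
    · obtain ⟨hk1, hk2⟩ := hkS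
      have hδ : 0 < w K - w k := sub_pos.mpr (hstrict k hk1 hk2)
      have t1 : Tendsto (fun x : ℝ => x ^ (-(w K - w k))) atTop (nhds 0) :=
        tendsto_rpow_neg_atTop hδ
      have t2 : Tendsto (fun n : ℕ => ((n:ℝ)) ^ (-(w K - w k))) atTop (nhds 0) :=
        t1.comp tendsto_natCast_atTop_atTop
      have t3 : Tendsto (fun n : ℕ => (Cu k * Cg k / c) * ((n:ℝ)) ^ (-(w K - w k)))
          atTop (nhds 0) := by
        have := t2.const_mul (Cu k * Cg k / c)
        simpa using this
      filter_upwards [t3.eventually_lt_const hε0] with n hn _ _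
      have : w k - w K = -(w K - w k) := by ring
      rw [this]
      exact hn.le
    · filter_upwards with n h1 h2; exact absurd ⟨h1, h2⟩ hkS
  obtain ⟨n, hP, hn⟩ :=
    ((Filter.eventually_all.mpr hPk).and (Filter.eventually_ge_atTop (max (max N M) 1))).exists
  have hnN : N ≤ n := le_trans (le_trans (le_max_left N M) (le_max_left _ 1)) hn
  have hnM : M ≤ n := le_trans (le_trans (le_max_right N M) (le_max_left _ 1)) hn
  have hn1 : 1 ≤ n := le_trans (le_max_right _ 1) hn
  have hn1R : (1:ℝ) ≤ (n:ℝ) := by exact_mod_cast hn1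
  have hn0R : (0:ℝ) < (n:ℝ) := by linarith
  have hsq := (by nlinarith [Real.sq_sqrt (by norm_num : (0:ℝ) ≤ 2), Real.sqrt_nonneg 2] :
    (1:ℝ) ≤ Real.sqrt 2)
  -- values of f
  have hfval : ∀ k : Fin (d + 1),
      f (n + (k : ℕ)) = ((Real.Gamma (((n:ℝ) + (k:ℕ)) * Real.sqrt 2) : ℝ) : ℂ) := by
    intro k
    rw [hf (n + (k : ℕ)) (le_trans hn1 (Nat.le_add_right _ _))]
    norm_num
  have hΓpos : ∀ k : Fin (d + 1), 0 < Real.Gamma (((n:ℝ) + (k:ℕ)) * Real.sqrt 2) := by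
    intro k
    apply Real.Gamma_pos_of_pos
    nlinarith [Nat.cast_nonneg (α := ℝ) (k : ℕ)]
  set T : Fin (d + 1) → ℂ := fun k => (p k).eval (n : ℂ) * f (n + (k : ℕ)) with hT
  have hTnorm : ∀ k : Fin (d + 1),
      ‖T k‖ = ‖(p k).eval (n:ℂ)‖ * Real.Gamma (((n:ℝ) + (k:ℕ)) * Real.sqrt 2) := by
    intro k
    rw [hT]
    simp only
    rw [norm_mul, hfval k, Complex.norm_real, Real.norm_eq_abs, abs_of_pos (hΓpos k)]
  -- lower bound on ‖T K‖
  have hTKlb : c * (n:ℝ) ^ (((p K).natDegree : ℝ)) *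
      Real.Gamma (((n:ℝ) + (K:ℕ)) * Real.sqrt 2) ≤ ‖T K‖ := by
    rw [hTnorm K]
    exact mul_le_mul_of_nonneg_right (hlo n hnM) (hΓpos K).le
  have hTKpos : 0 < ‖T K‖ :=
    lt_of_lt_of_le (by positivity) hTKlb
  -- main per-term bound
  have hbound : ∀ k : Fin (d + 1), k ≠ K → ‖T k‖ ≤ ε * ‖T K‖ := by
    intro k hne
    by_cases hkS : k ∈ S
    · have hA := hCub k n hn1
      have hB := hCgb k n hn1
      have key : ‖T k‖ ≤ (Cu k * Cg k / c) * (n:ℝ) ^ (w k - w K) * ‖T K‖ := by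
        rw [hTnorm k]
        have step1 : ‖(p k).eval (n:ℂ)‖ * Real.Gamma (((n:ℝ) + (k:ℕ)) * Real.sqrt 2) ≤
            (Cu k * (n:ℝ) ^ (((p k).natDegree : ℝ))) *
              (Cg k * (n:ℝ) ^ (Real.sqrt 2 * (k:ℕ) - Real.sqrt 2 * (K:ℕ)) *
                Real.Gamma (((n:ℝ) + (K:ℕ)) * Real.sqrt 2)) := by
          exact mul_le_mul hA hB (Real.Gamma_pos_of_pos (by
            nlinarith [Nat.cast_nonneg (α := ℝ) (k : ℕ)])).le
            (mul_nonneg (hCu k).le (Real.rpow_nonneg (Nat.cast_nonneg n) _))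
        have hexp : (n:ℝ) ^ (((p k).natDegree : ℝ)) *
            (n:ℝ) ^ (Real.sqrt 2 * (k:ℕ) - Real.sqrt 2 * (K:ℕ)) =
            (n:ℝ) ^ (w k - w K) * (n:ℝ) ^ (((p K).natDegree : ℝ)) := by
          rw [← Real.rpow_add hn0R, ← Real.rpow_add hn0R, hw]
          simp only
          ring_nf
        have step2 : (Cu k * (n:ℝ) ^ (((p k).natDegree : ℝ))) *
              (Cg k * (n:ℝ) ^ (Real.sqrt 2 * (k:ℕ) - Real.sqrt 2 * (K:ℕ)) *
                Real.Gamma (((n:ℝ) + (K:ℕ)) * Real.sqrt 2)) =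
            (Cu k * Cg k / c) * (n:ℝ) ^ (w k - w K) *
              (c * (n:ℝ) ^ (((p K).natDegree : ℝ)) *
                Real.Gamma (((n:ℝ) + (K:ℕ)) * Real.sqrt 2)) := by
          calc (Cu k * (n:ℝ) ^ (((p k).natDegree : ℝ))) *
              (Cg k * (n:ℝ) ^ (Real.sqrt 2 * (k:ℕ) - Real.sqrt 2 * (K:ℕ)) *
                Real.Gamma (((n:ℝ) + (K:ℕ)) * Real.sqrt 2)) =
              Cu k * Cg k * ((n:ℝ) ^ (((p k).natDegree : ℝ)) *
                (n:ℝ) ^ (Real.sqrt 2 * (k:ℕ) - Real.sqrt 2 * (K:ℕ))) *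
                Real.Gamma (((n:ℝ) + (K:ℕ)) * Real.sqrt 2) := by ring
            _ = Cu k * Cg k * ((n:ℝ) ^ (w k - w K) * (n:ℝ) ^ (((p K).natDegree : ℝ))) *
                Real.Gamma (((n:ℝ) + (K:ℕ)) * Real.sqrt 2) := by rw [hexp]
            _ = (Cu k * Cg k / c) * (n:ℝ) ^ (w k - w K) *
              (c * (n:ℝ) ^ (((p K).natDegree : ℝ)) *
                Real.Gamma (((n:ℝ) + (K:ℕ)) * Real.sqrt 2)) := by
                field_simp
        rw [step2] at step1
        refine le_trans step1 (mul_le_mul_of_nonneg_left hTKlb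
          (mul_nonneg (div_nonneg (mul_nonneg (hCu k).le (hCg k).le) hc.le)
            (Real.rpow_nonneg (Nat.cast_nonneg n) _)))
      refine le_trans key (mul_le_mul_of_nonneg_right (hP k hkS hne) hTKpos.le)
    · have : p k = 0 := by
        by_contra hcon
        exact hkS (by simp [hS, hcon])
      rw [hT]
      simp only [this]
      simp only [Polynomial.eval_zero, zero_mul, norm_zero]
      positivity
  -- contradiction from the recurrence
  have hsum := hrec n hnN
  have hTKeq : T K = -∑ k ∈ Finset.univ.erase K, T k := by
    rw [← Finset.add_sum_erase _ _ (Finset.mem_univ K)] at hsum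
    linear_combination hsum
  have hcard : (Finset.univ.erase K).card = d := by
    rw [Finset.card_erase_of_mem (Finset.mem_univ K), Finset.card_univ, Fintype.card_fin]
    omega
  have hle : ‖T K‖ ≤ (d : ℝ) * (ε * ‖T K‖) := by
    calc ‖T K‖ = ‖∑ k ∈ Finset.univ.erase K, T k‖ := by rw [hTKeq, norm_neg]
      _ ≤ ∑ k ∈ Finset.univ.erase K, ‖T k‖ := norm_sum_le _ _
      _ ≤ ∑ k ∈ Finset.univ.erase K, (ε * ‖T K‖) :=
          Finset.sum_le_sum (fun k hk => hbound k (Finset.ne_of_mem_erase hk))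
      _ = (d : ℝ) * (ε * ‖T K‖) := by rw [Finset.sum_const, hcard, nsmul_eq_mul]
  have hdd : (d : ℝ) * ε ≤ 1 / 2 := by
    rw [hε, mul_one_div, div_le_div_iff₀ (by positivity) (by norm_num : (0:ℝ) < 2)]
    nlinarith [Nat.cast_nonneg (α := ℝ) d]
  nlinarith [hTKpos, hle, hdd]
end

section
/- Every sequence f : ℕ → ℂ satisfying f(n) = 1/(2^n − 1) for all n ≥ 1 is not holonomic, and every sequence g : ℕ → ℂ satisfying g(n) = 1/(2^n + 1) for all n ≥ 1 is not holonomic. -/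
section NotHolonomicAux

open Filter Polynomial Finset
open scoped Topology

lemma lemA (q : Polynomial ℂ) (c : ℂ) (hc : ‖c‖ < 1) :
    Tendsto (fun n : ℕ => q.eval (n : ℂ) * c ^ n) atTop (𝓝 0) := by
  have : (fun n : ℕ => q.eval (n : ℂ) * c ^ n)
      = fun n : ℕ => ∑ j ∈ Finset.range (q.natDegree + 1), q.coeff j * ((n : ℂ) ^ j * c ^ n) := by
    funext n
    rw [q.eval_eq_sum_range, Finset.sum_mul]
    simp [mul_assoc]
  rw [this]
  have h0 : (0 : ℂ) = ∑ j ∈ Finset.range (q.natDegree + 1), 0 := by simp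
  rw [h0]
  refine tendsto_finset_sum _ (fun j _ => ?_)
  rw [← mul_zero (q.coeff j)]
  refine Tendsto.const_mul _ ?_
  rw [tendsto_zero_iff_norm_tendsto_zero]
  have := tendsto_pow_const_mul_const_pow_of_abs_lt_one j (r := ‖c‖)
    (by rwa [abs_of_nonneg (norm_nonneg c)])
  refine this.congr (fun n => ?_)
  simp [norm_pow]

lemma tendsto_inv_nat : Tendsto (fun n : ℕ => ((n : ℂ))⁻¹) atTop (𝓝 0) :=
  tendsto_inv_atTop_nhds_zero_nat (𝕜 := ℂ)

lemma lemB (q : Polynomial ℂ) :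
    Tendsto (fun n : ℕ => q.eval (n : ℂ) / (n : ℂ) ^ q.natDegree) atTop (𝓝 q.leadingCoeff) := by
  have hE : (fun n : ℕ => ∑ j ∈ Finset.range (q.natDegree + 1),
        q.coeff j * (((n : ℂ))⁻¹) ^ (q.natDegree - j))
      =ᶠ[atTop] fun n : ℕ => q.eval (n : ℂ) / (n : ℂ) ^ q.natDegree := by
    filter_upwards [eventually_ge_atTop 1] with n hn
    have hn0 : (n : ℂ) ≠ 0 := Nat.cast_ne_zero.2 (by omega)
    rw [q.eval_eq_sum_range, Finset.sum_div]
    refine (Finset.sum_congr rfl (fun j hj => ?_)).symm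
    rw [Finset.mem_range] at hj
    have hd : q.natDegree = j + (q.natDegree - j) := by omega
    rw [mul_div_assoc]
    congr 1
    rw [hd, pow_add, inv_pow]
    field_simp
    rw [Nat.add_sub_cancel_left]
  refine Tendsto.congr' hE ?_
  have hval : q.leadingCoeff = ∑ j ∈ Finset.range (q.natDegree + 1),
      q.coeff j * (if q.natDegree - j = 0 then 1 else 0) := by
    rw [Finset.sum_eq_single q.natDegree]
    · rw [Nat.sub_self, if_pos rfl, mul_one, Polynomial.leadingCoeff]
    · intro j hj hne
      rw [Finset.mem_range] at hj
      have : q.natDegree - j ≠ 0 := by omega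
      simp [this]
    · intro h
      exact absurd (Finset.self_mem_range_succ _) h
  rw [hval]
  refine tendsto_finset_sum _ (fun j _ => ?_)
  refine Tendsto.const_mul _ ?_
  rcases Nat.eq_zero_or_pos (q.natDegree - j) with h | h
  · simpa [h] using tendsto_const_nhds
  · simp only [if_neg h.ne']
    have := tendsto_inv_nat.pow (q.natDegree - j)
    rwa [zero_pow h.ne'] at this

lemma key (m N : ℕ) (q : Fin (m + 1) → Polynomial ℂ)
    (h : ∀ n : ℕ, N ≤ n → ∑ i : Fin (m + 1), (q i).eval (n : ℂ) * ((2 : ℂ) ^ (i : ℕ)) ^ n = 0) :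
    ∀ i, q i = 0 := by
  by_contra hc
  push_neg at hc
  obtain ⟨i₁, hi₁⟩ := hc
  set s : Finset (Fin (m + 1)) := Finset.univ.filter (fun i => q i ≠ 0) with hs
  have hsne : s.Nonempty := ⟨i₁, by simp [hs, hi₁]⟩
  set i₀ := s.max' hsne with hi₀
  have hqi₀ : q i₀ ≠ 0 := by
    have := s.max'_mem hsne
    simp [hs] at this
    exact this
  have htop : ∀ i : Fin (m + 1), i₀ < i → q i = 0 := by
    intro i hi
    by_contra hqi
    exact absurd (s.le_max' i (by simp [hs, hqi])) (not_le.2 hi)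
  set d := (q i₀).natDegree with hd
  set F : ℕ → ℂ := fun n => ∑ i : Fin (m + 1),
    (q i).eval (n : ℂ) * ((2 : ℂ) ^ (i : ℕ) / 2 ^ (i₀ : ℕ)) ^ n / (n : ℂ) ^ d with hF
  have h2 : (2 : ℂ) ≠ 0 := two_ne_zero
  have hFzero : ∀ᶠ n : ℕ in atTop, F n = 0 := by
    filter_upwards [eventually_ge_atTop (max N 1)] with n hn
    have hn1 : 1 ≤ n := le_trans (le_max_right _ _) hn
    have hnN : N ≤ n := le_trans (le_max_left _ _) hn
    have hn0 : (n : ℂ) ≠ 0 := Nat.cast_ne_zero.2 (by omega)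
    have : F n = (∑ i : Fin (m + 1), (q i).eval (n : ℂ) * ((2 : ℂ) ^ (i : ℕ)) ^ n)
        / (((2 : ℂ) ^ (i₀ : ℕ)) ^ n * (n : ℂ) ^ d) := by
      rw [hF, Finset.sum_div]
      refine Finset.sum_congr rfl (fun i _ => ?_)
      rw [div_pow]
      field_simp
    rw [this, h n hnN, zero_div]
  have hFlim : Tendsto F atTop (𝓝 ((q i₀).leadingCoeff)) := by
    have hval : (q i₀).leadingCoeff = ∑ i : Fin (m + 1),
        (if i = i₀ then (q i₀).leadingCoeff else 0) := by
      rw [Finset.sum_ite_eq' Finset.univ i₀ (fun _ => (q i₀).leadingCoeff)]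
      simp
    rw [hval]
    refine tendsto_finset_sum _ (fun i _ => ?_)
    rcases lt_trichotomy i i₀ with hlt | heq | hgt
    · rw [if_neg hlt.ne]
      have hclt : ‖(2 : ℂ) ^ (i : ℕ) / 2 ^ (i₀ : ℕ)‖ < 1 := by
        have h2n : ‖(2 : ℂ)‖ = 2 := by
          rw [Complex.norm_two]
        rw [norm_div, norm_pow, norm_pow, h2n, div_lt_one (by positivity)]
        exact pow_lt_pow_right₀ one_lt_two hlt
      have hA := lemA (q i) _ hclt
      refine squeeze_zero_norm'
        (a := fun n : ℕ => ‖(q i).eval (n : ℂ) * ((2 : ℂ) ^ (i : ℕ) / 2 ^ (i₀ : ℕ)) ^ n‖)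
        ?_ (by simpa using hA.norm)
      filter_upwards [eventually_ge_atTop 1] with n hn
      rw [norm_div]
      refine div_le_self (norm_nonneg _) ?_
      rw [norm_pow, Complex.norm_natCast]
      exact one_le_pow₀ (by exact_mod_cast hn)
    · rw [if_pos heq, heq]
      have : (fun n : ℕ => (q i₀).eval (n : ℂ) * ((2 : ℂ) ^ (i₀ : ℕ) / 2 ^ (i₀ : ℕ)) ^ n
          / (n : ℂ) ^ d) = fun n : ℕ => (q i₀).eval (n : ℂ) / (n : ℂ) ^ d := by
        funext n
        rw [div_self (pow_ne_zero _ h2), one_pow, mul_one]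
      rw [this, hd]
      exact lemB (q i₀)
    · rw [if_neg hgt.ne', htop i hgt]
      simpa using tendsto_const_nhds
  have : (q i₀).leadingCoeff = 0 :=
    tendsto_nhds_unique hFlim (Tendsto.congr'
      (show (fun _ : ℕ => (0 : ℂ)) =ᶠ[atTop] F from hFzero.mono fun n hn => hn.symm)
      tendsto_const_nhds)
  exact hqi₀ (Polynomial.leadingCoeff_eq_zero.1 this)

lemma norm_two_complex : ‖(2 : ℂ)‖ = 2 := by
  rw [Complex.norm_two]

lemma two_pow_inj {a b : ℕ} (h : (2 : ℂ) ^ a = 2 ^ b) : a = b := by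
  have : ((2 ^ a : ℕ) : ℂ) = ((2 ^ b : ℕ) : ℂ) := by push_cast; exact h
  have := Nat.cast_injective this
  exact Nat.pow_right_injective le_rfl this

lemma general (e : ℂ) (he1 : ‖e‖ = 1) (f : ℕ → ℂ)
    (hf : ∀ n : ℕ, 1 ≤ n → f n = 1 / ((2 : ℂ) ^ n - e)) : ¬ IsHolonomic f := by
  rintro ⟨d, N, p, ⟨k, hk⟩, hrec⟩
  have he0 : e ≠ 0 := by intro h; rw [h] at he1; simp at he1
  have h2 : (2 : ℂ) ≠ 0 := two_ne_zero
  have hne : ∀ m : ℕ, 1 ≤ m → (2 : ℂ) ^ m - e ≠ 0 := by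
    intro m hm h
    rw [sub_eq_zero] at h
    have h1 : ‖(2 : ℂ) ^ m‖ = 1 := by rw [h, he1]
    rw [norm_pow, norm_two_complex] at h1
    have h2' : (2 : ℝ) ^ 1 ≤ 2 ^ m := pow_le_pow_right₀ one_le_two hm
    norm_num at h2'
    linarith
  -- the bivariate polynomial
  set Q : Polynomial (Polynomial ℂ) := ∑ k' : Fin (d + 1), Polynomial.C (p k') *
      ∏ j ∈ Finset.univ.erase k',
        (Polynomial.C (Polynomial.C ((2 : ℂ) ^ (j : ℕ))) * Polynomial.X
          - Polynomial.C (Polynomial.C e)) with hQ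
  -- evaluation at (n, 2^n)
  have hQeval : ∀ n : ℕ, Polynomial.eval₂ (Polynomial.evalRingHom (n : ℂ)) ((2 : ℂ) ^ n) Q
      = ∑ k' : Fin (d + 1), (p k').eval (n : ℂ) *
          ∏ j ∈ Finset.univ.erase k', ((2 : ℂ) ^ (j : ℕ) * 2 ^ n - e) := by
    intro n
    rw [hQ, Polynomial.eval₂_finset_sum]
    refine Finset.sum_congr rfl (fun k' _ => ?_)
    rw [Polynomial.eval₂_mul, Polynomial.eval₂_C, Polynomial.eval₂_finset_prod]
    rw [show (Polynomial.evalRingHom ((n : ℂ))) (p k') = (p k').eval (n : ℂ) from rfl]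
    congr 1
    refine Finset.prod_congr rfl (fun j _ => ?_)
    simp only [Polynomial.eval₂_sub, Polynomial.eval₂_mul, Polynomial.eval₂_C,
      Polynomial.eval₂_X, Polynomial.coe_evalRingHom, Polynomial.eval_C]
  have hQzero : ∀ n : ℕ, max N 1 ≤ n →
      Polynomial.eval₂ (Polynomial.evalRingHom (n : ℂ)) ((2 : ℂ) ^ n) Q = 0 := by
    intro n hn
    have hn1 : 1 ≤ n := le_trans (le_max_right _ _) hn
    have hnN : N ≤ n := le_trans (le_max_left _ _) hn
    rw [hQeval]
    set g : Fin (d + 1) → ℂ := fun j => (2 : ℂ) ^ (j : ℕ) * 2 ^ n - e with hg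
    have hgne : ∀ j, g j ≠ 0 := by
      intro j
      have : g j = (2 : ℂ) ^ (n + (j : ℕ)) - e := by rw [hg, pow_add, mul_comm]
      rw [this]
      exact hne _ (by omega)
    have hfg : ∀ j : Fin (d + 1), f (n + (j : ℕ)) = (g j)⁻¹ := by
      intro j
      rw [hf _ (by omega), hg, one_div, pow_add, mul_comm ((2:ℂ)^n)]
    have hprod : ∀ k' : Fin (d + 1), ∏ j ∈ Finset.univ.erase k', g j
        = f (n + (k' : ℕ)) * ∏ j : Fin (d + 1), g j := by
      intro k'
      rw [← Finset.mul_prod_erase Finset.univ g (Finset.mem_univ k'), hfg, ← mul_assoc,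
        inv_mul_cancel₀ (hgne k'), one_mul]
    calc ∑ k' : Fin (d + 1), (p k').eval (n : ℂ) * ∏ j ∈ Finset.univ.erase k', g j
        = (∑ k' : Fin (d + 1), (p k').eval (n : ℂ) * f (n + (k' : ℕ)))
            * ∏ j : Fin (d + 1), g j := by
          rw [Finset.sum_mul]
          exact Finset.sum_congr rfl (fun k' _ => by rw [hprod, mul_assoc])
      _ = 0 := by rw [hrec n hnN, zero_mul]
  -- all coefficients of Q vanish
  have hcoeff : ∀ i : Fin (Q.natDegree + 1), Q.coeff (i : ℕ) = 0 := by
    refine key Q.natDegree (max N 1) (fun i => Q.coeff (i : ℕ)) ?_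
    intro n hn
    have h1 := hQzero n hn
    rw [Polynomial.eval₂_eq_sum_range] at h1
    rw [← h1, ← Fin.sum_univ_eq_sum_range
      (fun i => (Polynomial.evalRingHom (n : ℂ)) (Q.coeff i) * ((2:ℂ) ^ n) ^ i) (Q.natDegree + 1)]
    refine Finset.sum_congr rfl (fun i _ => ?_)
    rw [← pow_mul, mul_comm (i : ℕ) n, pow_mul]
    rfl
  have hQ0 : Q = 0 := by
    refine Polynomial.ext fun i => ?_
    rw [Polynomial.coeff_zero]
    rcases lt_or_ge i (Q.natDegree + 1) with h | h
    · exact hcoeff ⟨i, h⟩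
    · exact Polynomial.coeff_eq_zero_of_natDegree_lt (by omega)
  -- but Q is nonzero: evaluate at Y = e / 2^k
  have hψ : Polynomial.eval (Polynomial.C (e * ((2 : ℂ) ^ (k : ℕ))⁻¹)) Q
      = p k * ∏ j ∈ Finset.univ.erase k,
          Polynomial.C ((2 : ℂ) ^ (j : ℕ) * (e * ((2 : ℂ) ^ (k : ℕ))⁻¹) - e) := by
    rw [hQ, Polynomial.eval_finset_sum]
    rw [Finset.sum_eq_single k]
    · rw [Polynomial.eval_mul, Polynomial.eval_C, Polynomial.eval_prod]
      congr 1
      refine Finset.prod_congr rfl (fun j _ => ?_)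
      rw [Polynomial.eval_sub, Polynomial.eval_mul, Polynomial.eval_C, Polynomial.eval_X,
        Polynomial.eval_C, ← Polynomial.C_mul, ← Polynomial.C_sub]
    · intro k' _ hk'
      rw [Polynomial.eval_mul, Polynomial.eval_prod]
      have hkm : k ∈ Finset.univ.erase k' :=
        Finset.mem_erase.2 ⟨fun h => hk' h.symm, Finset.mem_univ _⟩
      rw [Finset.prod_eq_zero hkm, mul_zero]
      rw [Polynomial.eval_sub, Polynomial.eval_mul, Polynomial.eval_C, Polynomial.eval_X,
        Polynomial.eval_C, ← Polynomial.C_mul, ← Polynomial.C_sub, Polynomial.C_eq_zero,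
        ← mul_assoc, mul_comm ((2:ℂ) ^ (k:ℕ)) e, mul_assoc,
        mul_inv_cancel₀ (pow_ne_zero (k:ℕ) h2), mul_one, sub_self]
    · intro h; exact absurd (Finset.mem_univ k) h
  have hnz : p k * ∏ j ∈ Finset.univ.erase k,
      Polynomial.C ((2 : ℂ) ^ (j : ℕ) * (e * ((2 : ℂ) ^ (k : ℕ))⁻¹) - e) ≠ 0 := by
    refine mul_ne_zero hk ?_
    refine Finset.prod_ne_zero_iff.2 (fun j hj => ?_)
    rw [Ne, Polynomial.C_eq_zero, sub_eq_zero]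
    intro h
    have hjk : (j : ℕ) ≠ (k : ℕ) := by
      intro hh
      exact (Finset.mem_erase.1 hj).1 (Fin.ext hh)
    apply hjk
    apply two_pow_inj
    have h' : e * (2 : ℂ) ^ (j : ℕ) = e * 2 ^ (k : ℕ) := by
      have hk0 : ((2 : ℂ) ^ (k : ℕ)) ≠ 0 := pow_ne_zero _ h2
      field_simp at h
      linear_combination e * h
    exact mul_left_cancel₀ he0 h'
  rw [hQ0, Polynomial.eval_zero] at hψ
  exact hnz hψ.symm

end NotHolonomicAux

/-- Every sequence `f : ℕ → ℂ` satisfying `f(n) = 1/(2^n − 1)` for all `n ≥ 1` is not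
holonomic, and every sequence `g : ℕ → ℂ` satisfying `g(n) = 1/(2^n + 1)` for all `n ≥ 1`
is not holonomic. -/
theorem one_div_two_pow_pm_one_not_holonomic :
    (∀ f : ℕ → ℂ, (∀ n : ℕ, 1 ≤ n → f n = 1 / ((2 : ℂ) ^ n - 1)) → ¬ IsHolonomic f) ∧
    (∀ g : ℕ → ℂ, (∀ n : ℕ, 1 ≤ n → g n = 1 / ((2 : ℂ) ^ n + 1)) → ¬ IsHolonomic g) := by
  constructor
  · intro f hf
    exact general 1 (by simp) f (by simpa using hf)
  · intro g hg
    refine general (-1) (by simp) g ?_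
    intro n hn
    rw [hg n hn, sub_neg_eq_add]
end

section
/- Every sequence f : ℕ → ℂ satisfying f(n) = 1/ζ(n + 2) for all n ≥ 1, where ζ is the Riemann zeta function, is not holonomic. -/
open Filter Polynomial ArithmeticFunction
open scoped ArithmeticFunction.Moebius

private lemma zeta_aux_poly_eq_zero_of_tendsto (q : Polynomial ℂ)
    (h : Tendsto (fun n : ℕ => ‖q.eval (n:ℂ)‖) atTop (nhds 0)) : q = 0 := by
  rcases lt_or_ge 0 q.degree with hd | hd
  · exfalso
    have hz : Tendsto (fun n : ℕ => ‖((n:ℂ))‖) atTop atTop := by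
      simpa [Complex.norm_natCast] using tendsto_natCast_atTop_atTop (R := ℝ)
    exact not_tendsto_nhds_of_tendsto_atTop (q.tendsto_norm_atTop hd hz) 0 h
  · have hc : q = C (q.coeff 0) := eq_C_of_degree_le_zero hd
    have : ‖q.coeff 0‖ = 0 := by
      refine tendsto_nhds_unique (tendsto_const_nhds.congr ?_) h
      intro n; rw [hc]; simp
    rw [hc, norm_eq_zero.mp this]
    simp

private lemma zeta_aux_poly_mul_geom_tendsto_zero (p : Polynomial ℂ) {ρ : ℝ}
    (h0 : 0 ≤ ρ) (h1 : ρ < 1) :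
    Tendsto (fun n : ℕ => ‖p.eval (n:ℂ)‖ * ρ ^ n) atTop (nhds 0) := by
  have hsum : ∀ j : ℕ, Tendsto (fun n : ℕ => (n:ℝ) ^ j * ρ ^ n) atTop (nhds 0) := fun j =>
    (summable_pow_mul_geometric_of_norm_lt_one (R := ℝ) j
      (by simpa [abs_of_nonneg h0] using h1)).tendsto_atTop_zero
  have hg : Tendsto (fun n : ℕ => ∑ j ∈ p.support, ‖p.coeff j‖ * ((n:ℝ) ^ j * ρ ^ n))
      atTop (nhds 0) := by
    have := tendsto_finset_sum p.support (fun j _ => (hsum j).const_mul ‖p.coeff j‖)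
    simpa using this
  refine squeeze_zero (fun n => by positivity) (fun n => ?_) hg
  have hev : ‖p.eval (n:ℂ)‖ ≤ ∑ j ∈ p.support, ‖p.coeff j‖ * (n:ℝ) ^ j := by
    calc ‖p.eval (n:ℂ)‖ = ‖∑ j ∈ p.support, p.coeff j * (n:ℂ) ^ j‖ := by
          rw [Polynomial.eval_eq_sum, Polynomial.sum_def]
      _ ≤ ∑ j ∈ p.support, ‖p.coeff j * (n:ℂ) ^ j‖ := norm_sum_le _ _
      _ = ∑ j ∈ p.support, ‖p.coeff j‖ * (n:ℝ) ^ j := by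
          refine Finset.sum_congr rfl fun j _ => ?_
          rw [norm_mul, norm_pow, Complex.norm_natCast]
  calc ‖p.eval (n:ℂ)‖ * ρ ^ n ≤ (∑ j ∈ p.support, ‖p.coeff j‖ * (n:ℝ) ^ j) * ρ ^ n :=
        mul_le_mul_of_nonneg_right hev (by positivity)
    _ = ∑ j ∈ p.support, ‖p.coeff j‖ * ((n:ℝ) ^ j * ρ ^ n) := by
        rw [Finset.sum_mul]; exact Finset.sum_congr rfl fun j _ => by ring

private lemma zeta_aux_p_eq_zero_of_Q_zero {d : ℕ} (p : Fin (d+1) → Polynomial ℂ)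
    (h : ∀ q : ℕ, Nat.Prime q → (∑ k : Fin (d+1), p k * C ((q:ℂ)⁻¹ ^ (k:ℕ))) = 0) :
    ∀ k, p k = 0 := by
  classical
  have key : ∀ j : ℕ, ∀ k : Fin (d+1), (p k).coeff j = 0 := by
    intro j
    set S : Polynomial ℂ := ∑ k : Fin (d+1), C ((p k).coeff j) * X ^ (k:ℕ) with hS
    have hroot : ∀ q : ℕ, Nat.Prime q → S.IsRoot ((q:ℂ)⁻¹) := by
      intro q hq
      have h0 := congrArg (fun r => r.coeff j) (h q hq)
      simp only [Polynomial.finset_sum_coeff, Polynomial.coeff_mul_C,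
        Polynomial.coeff_zero] at h0
      unfold S
      simp only [IsRoot, Polynomial.eval_finset_sum, Polynomial.eval_mul,
        Polynomial.eval_C, Polynomial.eval_pow, Polynomial.eval_X]
      exact h0
    have hinf : {x : ℂ | S.IsRoot x}.Infinite := by
      have hinj : Function.Injective (fun q : ℕ => (q:ℂ)⁻¹) :=
        inv_injective.comp Nat.cast_injective
      have hsub : (fun q : ℕ => (q:ℂ)⁻¹) '' {q | Nat.Prime q} ⊆ {x : ℂ | S.IsRoot x} := by
        rintro x ⟨q, hq, rfl⟩; exact hroot q hq
      exact (Nat.infinite_setOf_prime.image hinj.injOn).mono hsub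
    have hS0 : S = 0 := Polynomial.eq_zero_of_infinite_isRoot S hinf
    intro k
    have := congrArg (fun r => r.coeff (k:ℕ)) hS0
    simp only [hS, Polynomial.finset_sum_coeff, Polynomial.coeff_C_mul,
      Polynomial.coeff_X_pow, Polynomial.coeff_zero, mul_ite, mul_one, mul_zero] at this
    rwa [Finset.sum_eq_single k (fun b _ hb => if_neg (by
        simpa [Fin.val_eq_val] using (Ne.symm hb))) (by simp), if_pos rfl] at this
  intro k
  ext j
  simp [key j k]

/-- Every sequence `f : ℕ → ℂ` satisfying `f(n) = 1/ζ(n+2)` for all `n ≥ 1`, where `ζ` is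
the Riemann zeta function, is not holonomic. -/
theorem one_div_zeta_not_holonomic
    (f : ℕ → ℂ) (hf : ∀ n : ℕ, 1 ≤ n → f n = 1 / riemannZeta ((n : ℂ) + 2)) :
    ¬ IsHolonomic f := by
  rintro ⟨d, N, p, ⟨k₀, hk₀⟩, hrec⟩
  classical
  set Q : ℕ → Polynomial ℂ := fun m => ∑ k : Fin (d+1), p k * C ((m:ℂ)⁻¹ ^ (k:ℕ)) with hQdef
  set N₀ : ℕ := max N 1 with hN₀
  -- The series representation of the recurrence
  have hG : ∀ n : ℕ, N₀ ≤ n →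
      HasSum (fun m : ℕ => ((μ m : ℤ) : ℂ) * (((m:ℂ)) ^ (n+2))⁻¹ * (Q m).eval (n:ℂ)) 0 := by
    intro n hn
    have hn1 : 1 ≤ n := le_trans (le_max_right N 1) hn
    have hnN : N ≤ n := le_trans (le_max_left N 1) hn
    have hk : ∀ k : Fin (d+1),
        HasSum (fun m => (p k).eval (n:ℂ) *
            LSeries.term (fun j => ((μ j : ℤ):ℂ)) (((n + (k:ℕ) : ℕ):ℂ) + 2) m)
          ((p k).eval (n:ℂ) * f (n + (k:ℕ))) := by
      intro k
      have hre : 1 < ((((n + (k:ℕ) : ℕ)):ℂ) + 2).re := by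
        simp only [Complex.add_re, Complex.natCast_re, Complex.re_ofNat]
        have : (0:ℝ) ≤ ((n + (k:ℕ) : ℕ):ℝ) := Nat.cast_nonneg _
        push_cast at this ⊢
        linarith
      have hsummable : LSeriesSummable (fun j => ((μ j : ℤ):ℂ)) (((n + (k:ℕ) : ℕ):ℂ) + 2) :=
        ArithmeticFunction.LSeriesSummable_moebius_iff.mpr hre
      have hval : LSeries (fun j => ((μ j : ℤ):ℂ)) (((n + (k:ℕ) : ℕ):ℂ) + 2) = f (n + (k:ℕ)) := by
        rw [hf (n + (k:ℕ)) (le_trans hn1 (Nat.le_add_right n _))]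
        have hζ := LSeries_one_mul_Lseries_moebius (s := ((n + (k:ℕ) : ℕ):ℂ) + 2) hre
        rw [LSeries_one_eq_riemannZeta hre] at hζ
        rw [mul_comm] at hζ
        exact eq_one_div_of_mul_eq_one_left hζ
      exact hval ▸ (hsummable.hasSum.mul_left _)
    have htotal := hasSum_sum (f := fun (k : Fin (d+1)) (m : ℕ) =>
        (p k).eval (n:ℂ) * LSeries.term (fun j => ((μ j : ℤ):ℂ)) (((n + (k:ℕ) : ℕ):ℂ) + 2) m)
      (s := Finset.univ) (fun k _ => hk k)
    rw [hrec n hnN] at htotal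
    refine htotal.congr_fun fun m => ?_
    rcases Nat.eq_zero_or_pos m with rfl | hm
    · simp [LSeries.term_zero]
    have hm0 : (m:ℂ) ≠ 0 := Nat.cast_ne_zero.mpr hm.ne'
    have hterm : ∀ k : Fin (d+1),
        LSeries.term (fun j => ((μ j : ℤ):ℂ)) (((n + (k:ℕ) : ℕ):ℂ) + 2) m
          = ((μ m : ℤ):ℂ) / ((m:ℂ) ^ (n + 2) * (m:ℂ) ^ (k:ℕ)) := by
      intro k
      rw [LSeries.term_of_ne_zero hm.ne']
      congr 1
      have hcast : (((n + (k:ℕ) : ℕ):ℂ) + 2) = ((n + (k:ℕ) + 2 : ℕ) : ℂ) := by push_cast; ring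
      rw [hcast, Complex.cpow_natCast, show n + (k:ℕ) + 2 = (n+2) + (k:ℕ) by ring, pow_add]
    simp only [hterm]
    rw [hQdef]
    simp only [Polynomial.eval_finset_sum, Polynomial.eval_mul, Polynomial.eval_C, Finset.mul_sum]
    refine Finset.sum_congr rfl fun k _ => ?_
    rw [div_eq_mul_inv, mul_inv, ← inv_pow]
    ring
  -- There is a prime q with Q q ≠ 0
  have hexists : ∃ q : ℕ, Nat.Prime q ∧ Q q ≠ 0 := by
    by_contra hcon
    push_neg at hcon
    exact hk₀ (zeta_aux_p_eq_zero_of_Q_zero p (fun q hq => hcon q hq) k₀)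
  obtain ⟨q, hqprime, hqQ⟩ := hexists
  -- Minimal squarefree M ≥ 1 with Q M ≠ 0
  have hPex : ∃ m : ℕ, 1 ≤ m ∧ Squarefree m ∧ Q m ≠ 0 :=
    ⟨q, hqprime.one_lt.le, hqprime.prime.squarefree, hqQ⟩
  set M : ℕ := Nat.find hPex with hMdef
  obtain ⟨hM1, hMsq, hMQ⟩ : 1 ≤ M ∧ Squarefree M ∧ Q M ≠ 0 := Nat.find_spec hPex
  have hmin : ∀ m : ℕ, m < M → 1 ≤ m → Squarefree m → Q m = 0 := by
    intro m hm h1 h2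
    by_contra hne
    exact Nat.find_min hPex hm ⟨h1, h2, hne⟩
  -- notation for bounds
  set A : ℕ → ℝ := fun n => ∑ k : Fin (d+1), ‖(p k).eval (n:ℂ)‖ with hAdef
  have hA0 : ∀ n, 0 ≤ A n := fun n => Finset.sum_nonneg fun _ _ => norm_nonneg _
  have hS₂sum : Summable (fun m : ℕ => ((m:ℝ)^2)⁻¹) := by
    simpa [one_div] using summable_one_div_nat_pow.mpr (by norm_num : 1 < 2)
  set S₂ : ℝ := ∑' m : ℕ, ((m:ℝ)^2)⁻¹ with hS₂def
  set r : ℝ := ((M:ℝ) + 1)⁻¹ with hrdef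
  have hr0 : 0 < r := by positivity
  -- The key estimate
  have hbound : ∀ n : ℕ, N₀ ≤ n →
      ‖(Q M).eval (n:ℂ)‖ ≤ ((M:ℝ)^2 * S₂) * (A n * ((M:ℝ) * r)^n) := by
    intro n hn
    have hsum := hG n hn
    set G : ℕ → ℂ := fun m => ((μ m : ℤ) : ℂ) * (((m:ℂ)) ^ (n+2))⁻¹ * (Q m).eval (n:ℂ) with hGdef
    have hGsummable : Summable G := hsum.summable
    have hvanish : ∀ m : ℕ, m < M → G m = 0 := by
      intro m hm
      rcases Nat.eq_zero_or_pos m with rfl | h1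
      · simp [hGdef]
      by_cases hsq : Squarefree m
      · simp [hGdef, hmin m hm h1 hsq]
      · simp [hGdef, ArithmeticFunction.moebius_eq_zero_of_not_squarefree hsq]
    -- ‖G M‖ bound by the tail
    have htail : G M = - ∑' m : ℕ, ite (m = M) 0 (G m) := by
      have h0 := Summable.tsum_eq_add_tsum_ite hGsummable M
      rw [hsum.tsum_eq] at h0
      exact eq_neg_of_add_eq_zero_left h0.symm
    have hb : ∀ m : ℕ, ‖ite (m = M) 0 (G m)‖ ≤ (A n * r ^ n) * ((m:ℝ)^2)⁻¹ := by
      intro m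
      by_cases hm : m = M
      · rw [if_pos hm, norm_zero]
        exact mul_nonneg (mul_nonneg (hA0 n) (by positivity)) (by positivity)
      rw [if_neg hm]
      rcases lt_or_ge m M with hlt | hge
      · rw [hvanish m hlt, norm_zero]
        exact mul_nonneg (mul_nonneg (hA0 n) (by positivity)) (by positivity)
      have hgt : M < m := lt_of_le_of_ne hge (Ne.symm hm)
      have hm1 : 1 ≤ m := le_trans hM1 hge
      have hmR : (1:ℝ) ≤ (m:ℝ) := by exact_mod_cast hm1
      have hMm : ((M:ℝ) + 1) ≤ (m:ℝ) := by exact_mod_cast hgt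
      have hQev : ‖(Q m).eval (n:ℂ)‖ ≤ A n := by
        rw [hQdef]
        simp only [Polynomial.eval_finset_sum, Polynomial.eval_mul, Polynomial.eval_C]
        refine le_trans (norm_sum_le _ _) (Finset.sum_le_sum fun k _ => ?_)
        rw [norm_mul]
        have h1' : ‖((m:ℂ))⁻¹ ^ (k:ℕ)‖ ≤ 1 := by
          rw [norm_pow, norm_inv, Complex.norm_natCast]
          exact pow_le_one₀ (by positivity) (inv_le_one_of_one_le₀ hmR)
        calc ‖(p k).eval (n:ℂ)‖ * ‖((m:ℂ))⁻¹ ^ (k:ℕ)‖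
            ≤ ‖(p k).eval (n:ℂ)‖ * 1 := by gcongr
          _ = ‖(p k).eval (n:ℂ)‖ := mul_one _
      have hμ : ‖((μ m : ℤ):ℂ)‖ ≤ 1 := by
        rw [Complex.norm_intCast]
        have habs : |μ m| ≤ (1:ℤ) := by
          rw [ArithmeticFunction.abs_moebius]; split <;> norm_num
        calc |((μ m : ℤ):ℝ)| = ((|μ m| : ℤ) : ℝ) := by rw [Int.cast_abs]
          _ ≤ 1 := by exact_mod_cast habs
      have hinv : (((m:ℝ)) ^ (n+2))⁻¹ ≤ r ^ n * ((m:ℝ)^2)⁻¹ := by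
        rw [hrdef, inv_pow, ← mul_inv]
        refine inv_anti₀ (by positivity) ?_
        calc ((M:ℝ)+1) ^ n * (m:ℝ)^2 ≤ (m:ℝ) ^ n * (m:ℝ)^2 := by gcongr
          _ = (m:ℝ) ^ (n+2) := by rw [← pow_add]
      have hGnorm : ‖G m‖ = ‖((μ m : ℤ):ℂ)‖ * (((m:ℝ)) ^ (n+2))⁻¹ * ‖(Q m).eval (n:ℂ)‖ := by
        rw [hGdef]
        simp only [norm_mul, norm_inv, norm_pow, Complex.norm_natCast]
      rw [hGnorm]
      calc ‖((μ m : ℤ):ℂ)‖ * (((m:ℝ)) ^ (n+2))⁻¹ * ‖(Q m).eval (n:ℂ)‖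
          ≤ 1 * (r ^ n * ((m:ℝ)^2)⁻¹) * A n :=
            mul_le_mul (mul_le_mul hμ hinv (by positivity) (by norm_num)) hQev
              (norm_nonneg _) (by positivity)
        _ = (A n * r ^ n) * ((m:ℝ)^2)⁻¹ := by ring
    have hbsum : Summable (fun m : ℕ => (A n * r ^ n) * ((m:ℝ)^2)⁻¹) := hS₂sum.mul_left _
    have hnormGM : ‖G M‖ ≤ (A n * r ^ n) * S₂ := by
      rw [htail, norm_neg]
      calc ‖∑' m : ℕ, ite (m = M) 0 (G m)‖ ≤ ∑' m : ℕ, (A n * r ^ n) * ((m:ℝ)^2)⁻¹ :=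
            tsum_of_norm_bounded hbsum.hasSum hb
        _ = (A n * r ^ n) * S₂ := by rw [hS₂def, tsum_mul_left]
    have hμM : ‖((μ M : ℤ):ℂ)‖ = 1 := by
      rw [Complex.norm_intCast]
      have := ArithmeticFunction.abs_moebius_eq_one_of_squarefree hMsq
      calc |((μ M : ℤ):ℝ)| = ((|μ M| : ℤ) : ℝ) := by rw [Int.cast_abs]
        _ = 1 := by rw [this]; norm_num
    have hGM : ‖G M‖ = (((M:ℝ)) ^ (n+2))⁻¹ * ‖(Q M).eval (n:ℂ)‖ := by
      rw [hGdef]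
      simp only [norm_mul, norm_inv, norm_pow, Complex.norm_natCast, hμM, one_mul]
    rw [hGM] at hnormGM
    have hMpos : (0:ℝ) < ((M:ℝ)) ^ (n+2) := by
      have : (1:ℝ) ≤ (M:ℝ) := by exact_mod_cast hM1
      positivity
    rw [inv_mul_le_iff₀ hMpos] at hnormGM
    calc ‖(Q M).eval (n:ℂ)‖ ≤ ((M:ℝ)) ^ (n+2) * (A n * r ^ n * S₂) := hnormGM
      _ = ((M:ℝ)^2 * S₂) * (A n * ((M:ℝ) * r)^n) := by
          rw [show n + 2 = 2 + n by ring, pow_add, mul_pow]; ring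
  -- limit argument
  have hρ : (0:ℝ) ≤ (M:ℝ) * r ∧ (M:ℝ) * r < 1 := by
    constructor
    · positivity
    · rw [hrdef, ← div_eq_mul_inv]
      refine (div_lt_one (by positivity)).mpr (by linarith)
  have htendA : Tendsto (fun n : ℕ => A n * ((M:ℝ) * r)^n) atTop (nhds 0) := by
    have : ∀ n : ℕ, A n * ((M:ℝ) * r)^n
        = ∑ k : Fin (d+1), ‖(p k).eval (n:ℂ)‖ * ((M:ℝ) * r)^n := by
      intro n; rw [hAdef, Finset.sum_mul]
    rw [funext this]
    have := tendsto_finset_sum (Finset.univ : Finset (Fin (d+1)))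
      (fun k _ => zeta_aux_poly_mul_geom_tendsto_zero (p k) hρ.1 hρ.2)
    simpa using this
  have htendQ : Tendsto (fun n : ℕ => ‖(Q M).eval (n:ℂ)‖) atTop (nhds 0) := by
    refine squeeze_zero' (Eventually.of_forall fun n => norm_nonneg _)
      (eventually_atTop.mpr ⟨N₀, hbound⟩) ?_
    have := htendA.const_mul ((M:ℝ)^2 * S₂)
    simpa using this
  exact hMQ (zeta_aux_poly_eq_zero_of_tendsto (Q M) htendQ)
end

section
/- Let C := −1 + ∑_{k=2}^∞ ζ(k)/k!, where ζ is the Riemann zeta function. Then, as z → −1⁺ with z real in (−1, 0), ∑_{n=1}^∞ e^{1/n}·(−z)^n = 1/(1+z) + log(1/(1+z)) + C + O((1+z)·log(1/(1+z))). -/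
open Filter Asymptotics

namespace ExpGenAux

noncomputable def b (m : ℕ) : ℝ := Real.exp (1 / ((m : ℝ) + 1)) - 1 - 1 / ((m : ℝ) + 1)

lemma hasSum_exp_real (y : ℝ) : HasSum (fun k : ℕ => y ^ k / k.factorial) (Real.exp y) := by
  have hs := (Real.summable_pow_div_factorial y).hasSum
  have he : Real.exp y = ∑' n : ℕ, y ^ n / n.factorial := by
    rw [Real.exp_eq_exp_ℝ, NormedSpace.exp_eq_tsum_div]
  rwa [← he] at hs

lemma hasSum_b (m : ℕ) :
    HasSum (fun k : ℕ => (1 / ((m : ℝ) + 1)) ^ (k + 2) / (k + 2).factorial) (b m) := by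
  set y : ℝ := 1 / ((m : ℝ) + 1) with hy
  have h2 := (hasSum_nat_add_iff' (f := fun k : ℕ => y ^ k / k.factorial) 2).mpr
    (hasSum_exp_real y)
  have hsum : ∑ i ∈ Finset.range 2, y ^ i / (i.factorial : ℝ) = 1 + y := by
    simp [Finset.sum_range_succ]
  rw [hsum] at h2
  have hb : b m = Real.exp y - (1 + y) := by rw [hy]; simp only [b, one_div]; ring
  rw [hb]; exact h2

lemma b_nonneg (m : ℕ) : 0 ≤ b m := by
  have := Real.add_one_le_exp (1 / ((m : ℝ) + 1))
  simp only [b]; linarith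

lemma b_le (m : ℕ) : b m ≤ 1 / ((m : ℝ) + 1) ^ 2 := by
  have hy0 : (0:ℝ) ≤ 1 / ((m : ℝ) + 1) := by positivity
  have hy1 : 1 / ((m : ℝ) + 1) ≤ 1 := by
    rw [div_le_one (by positivity)]; linarith [Nat.cast_nonneg (α := ℝ) m]
  set y : ℝ := 1 / ((m : ℝ) + 1) with hy
  have h0 := (hasSum_b 0).mul_left (y ^ 2)
  have hle : b m ≤ y ^ 2 * b 0 := by
    refine hasSum_le (fun k => ?_) (hasSum_b m) h0
    have hyk : y ^ (k + 2) ≤ y ^ 2 := by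
      have h1 : y ^ k ≤ 1 := pow_le_one₀ hy0 hy1
      calc y ^ (k + 2) = y ^ 2 * y ^ k := by ring
        _ ≤ y ^ 2 * 1 := by nlinarith [sq_nonneg y]
        _ = y ^ 2 := mul_one _
    have hc : (0:ℝ) < (k + 2).factorial := by positivity
    have h1 : ((1:ℝ) / (((0:ℕ):ℝ) + 1)) ^ (k + 2) / ((k + 2).factorial : ℝ)
        = ((k + 2).factorial : ℝ)⁻¹ := by norm_num
    show y ^ (k + 2) / ((k + 2).factorial : ℝ)
        ≤ y ^ 2 * (((1:ℝ) / (((0:ℕ):ℝ) + 1)) ^ (k + 2) / ((k + 2).factorial : ℝ))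
    rw [h1, ← div_eq_mul_inv]
    gcongr
  have hb0 : b 0 ≤ 1 := by
    have := Real.exp_one_lt_d9
    simp only [b]; norm_num; linarith
  calc b m ≤ y ^ 2 * b 0 := hle
    _ ≤ y ^ 2 * 1 := by nlinarith [sq_nonneg y]
    _ = 1 / ((m : ℝ) + 1) ^ 2 := by rw [hy]; rw [div_pow]; ring


lemma summable_inv_sq : Summable (fun m : ℕ => 1 / ((m : ℝ) + 1) ^ 2) := by
  have h : Summable (fun n : ℕ => 1 / (n : ℝ) ^ 2) := Real.summable_one_div_nat_pow.mpr one_lt_two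
  have := (summable_nat_add_iff 1).mpr h
  refine this.congr fun n => ?_
  push_cast
  ring_nf

lemma summable_b : Summable b :=
  Summable.of_nonneg_of_le b_nonneg b_le summable_inv_sq

noncomputable def B : ℝ := ∑' m, b m

lemma zeta_term (k : ℕ) :
    riemannZeta ((k : ℂ) + 2)
      = (((∑' m : ℕ, (1 / ((m : ℝ) + 1)) ^ (k + 2)) : ℝ) : ℂ) := by
  have hre : 1 < ((k : ℂ) + 2).re := by
    simp only [Complex.add_re, Complex.natCast_re, Complex.re_ofNat]
    have : (0:ℝ) ≤ (k : ℝ) := Nat.cast_nonneg k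
    linarith
  rw [zeta_eq_tsum_one_div_nat_add_one_cpow hre, Complex.ofReal_tsum]
  congr 1
  funext n
  have h1 : ((k : ℂ) + 2) = ((k + 2 : ℕ) : ℂ) := by push_cast; ring
  rw [h1, Complex.cpow_natCast]
  push_cast
  rw [div_pow]
  norm_num

lemma hasSum_zeta_b :
    HasSum (fun k : ℕ => (∑' m : ℕ, (1 / ((m : ℝ) + 1)) ^ (k + 2)) / (k + 2).factorial) B := by
  set f : ℕ × ℕ → ℝ := fun p => (1 / ((p.1 : ℝ) + 1)) ^ (p.2 + 2) / (p.2 + 2).factorial with hf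
  have hf0 : 0 ≤ f := fun p => by positivity
  have hfib : ∀ m : ℕ, HasSum (fun k => f (m, k)) (b m) := fun m => hasSum_b m
  have hsf : Summable f := by
    rw [summable_prod_of_nonneg hf0]
    refine ⟨fun m => (hfib m).summable, ?_⟩
    refine summable_b.congr fun m => ?_
    exact ((hfib m).tsum_eq).symm
  have hswap : ∑' (k) (m), f (m, k) = ∑' (m) (k), f (m, k) := by
    refine Summable.tsum_comm' hsf (fun m => (hfib m).summable) (fun k => ?_)
    exact hsf.prod_symm.prod_factor k
  have hs2 : Summable (fun k => ∑' m, f (m, k)) := by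
    have h := (summable_prod_of_nonneg (f := fun q : ℕ × ℕ => f (q.2, q.1))
      (fun q => hf0 (q.2, q.1))).mp hsf.prod_symm
    exact h.2
  have ht : ∑' k, ∑' m, f (m, k) = B := by
    rw [hswap, show (∑' (m) (k), f (m, k)) = ∑' m, b m from by
      congr 1; funext m; exact (hfib m).tsum_eq]
    rfl
  have hfin := hs2.hasSum
  rw [ht] at hfin
  have heq : (fun k : ℕ => (∑' m : ℕ, (1 / ((m : ℝ) + 1)) ^ (k + 2)) / (k + 2).factorial)
      = fun k => ∑' m, f (m, k) := by
    funext k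
    exact (tsum_div_const (f := fun m : ℕ => (1 / ((m : ℝ) + 1)) ^ (k + 2))
      (a := ((k + 2).factorial : ℝ))).symm
  rw [heq]
  exact hfin


lemma C_eq (C : ℂ)
    (hC : C = -1 + ∑' k : ℕ, riemannZeta ((k : ℂ) + 2) / ((k + 2).factorial : ℂ)) :
    C = ((-1 + B : ℝ) : ℂ) := by
  rw [hC]
  have hterm : ∀ k : ℕ, riemannZeta ((k : ℂ) + 2) / ((k + 2).factorial : ℂ)
      = ((((∑' m : ℕ, (1 / ((m : ℝ) + 1)) ^ (k + 2)) / (k + 2).factorial : ℝ)) : ℂ) := by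
    intro k
    rw [zeta_term k]
    push_cast
    ring
  rw [tsum_congr hterm, ← Complex.ofReal_tsum, hasSum_zeta_b.tsum_eq]
  push_cast
  ring

lemma summable_G (x : ℝ) (hx0 : 0 ≤ x) (hx1 : x ≤ 1) :
    Summable (fun n : ℕ => b n * (1 - x ^ (n + 1))) := by
  refine Summable.of_nonneg_of_le (fun n => ?_) (fun n => ?_) summable_b
  · have := pow_le_one₀ hx0 hx1 (n := n + 1)
    have := b_nonneg n
    nlinarith
  · have h1 : 0 ≤ x ^ (n + 1) := pow_nonneg hx0 _
    have := b_nonneg n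
    nlinarith

lemma key (x : ℝ) (hx0 : 0 ≤ x) (hx1 : x < 1) :
    (∑' n : ℕ, Real.exp (1 / ((n : ℝ) + 1)) * x ^ (n + 1))
      - (1 / (1 - x) + Real.log (1 / (1 - x)) + (-1 + B))
      = -(∑' n : ℕ, b n * (1 - x ^ (n + 1))) := by
  have h1x : (1:ℝ) - x ≠ 0 := by linarith
  have hgeo : HasSum (fun n : ℕ => x ^ (n + 1)) (x * (1 - x)⁻¹) := by
    have h := (hasSum_geometric_of_lt_one hx0 hx1).mul_left x
    have heq : (fun n : ℕ => x * x ^ n) = fun n : ℕ => x ^ (n + 1) := by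
      funext n; rw [pow_succ]; ring
    rwa [heq] at h
  have hlog : HasSum (fun n : ℕ => x ^ (n + 1) / ((n : ℝ) + 1)) (-Real.log (1 - x)) := by
    have := Real.hasSum_pow_div_log_of_abs_lt_one (x := x) (by rwa [abs_of_nonneg hx0])
    exact this
  have hG := (summable_G x hx0 hx1.le).hasSum
  have hb := summable_b.hasSum
  have hbx : HasSum (fun n : ℕ => b n * x ^ (n + 1))
      (B - ∑' n : ℕ, b n * (1 - x ^ (n + 1))) := by
    have h := hb.sub hG
    have heq : (fun n : ℕ => b n - b n * (1 - x ^ (n + 1)))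
        = fun n : ℕ => b n * x ^ (n + 1) := by
      funext n; ring
    rwa [heq] at h
  have htot : HasSum (fun n : ℕ => Real.exp (1 / ((n : ℝ) + 1)) * x ^ (n + 1))
      (x * (1 - x)⁻¹ + -Real.log (1 - x)
        + (B - ∑' n : ℕ, b n * (1 - x ^ (n + 1)))) := by
    have h := (hgeo.add hlog).add hbx
    have heq : (fun n : ℕ => x ^ (n + 1) + x ^ (n + 1) / ((n : ℝ) + 1) + b n * x ^ (n + 1))
        = fun n : ℕ => Real.exp (1 / ((n : ℝ) + 1)) * x ^ (n + 1) := by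
      funext n
      have hn : ((n : ℝ) + 1) ≠ 0 := by positivity
      simp only [b]
      field_simp
      ring
    rwa [heq] at h
  rw [htot.tsum_eq, one_div (1 - x), Real.log_inv]
  field_simp
  ring


lemma one_sub_pow_le (x : ℝ) (hx0 : 0 ≤ x) (hx1 : x ≤ 1) (n : ℕ) :
    1 - x ^ n ≤ n * (1 - x) := by
  induction n with
  | zero => simp
  | succ n ih =>
    have hxn0 : 0 ≤ x ^ n := pow_nonneg hx0 n
    have hxn1 : x ^ n ≤ 1 := pow_le_one₀ hx0 hx1
    have hp : x ^ (n + 1) = x ^ n * x := pow_succ x n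
    push_cast
    nlinarith

lemma harmonic_sum_le (N : ℕ) :
    ∑ m ∈ Finset.range N, 1 / ((m : ℝ) + 1) ≤ 1 + Real.log N := by
  have h := harmonic_le_one_add_log N
  have he : ((harmonic N : ℚ) : ℝ) = ∑ m ∈ Finset.range N, 1 / ((m : ℝ) + 1) := by
    rw [harmonic]
    push_cast
    simp [one_div]
  linarith [he ▸ h]

lemma tail_sq (N : ℕ) (hN : 1 ≤ N) :
    ∑' i : ℕ, 1 / (((i + N : ℕ) : ℝ) + 1) ^ 2 ≤ 1 / (N : ℝ) := by
  have hN0 : (0:ℝ) < N := by exact_mod_cast hN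
  refine Real.tsum_le_of_sum_range_le (fun n => by positivity) (fun n => ?_)
  have key : ∀ n : ℕ, ∑ i ∈ Finset.range n, 1 / (((i + N : ℕ) : ℝ) + 1) ^ 2
      ≤ 1 / (N : ℝ) - 1 / ((N : ℝ) + n) := by
    intro n
    induction n with
    | zero => simp
    | succ n ih =>
      rw [Finset.sum_range_succ]
      have ha : (0:ℝ) < (N : ℝ) + n := by positivity
      have hstep : 1 / (((n + N : ℕ) : ℝ) + 1) ^ 2
          ≤ 1 / ((N : ℝ) + n) - 1 / ((N : ℝ) + (n + 1)) := by
        have hcast : (((n + N : ℕ) : ℝ) + 1) = (N : ℝ) + n + 1 := by push_cast; ring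
        rw [hcast]
        rw [div_sub_div _ _ (ne_of_gt ha) (by positivity : ((N:ℝ) + (n+1)) ≠ 0)]
        have hnum : (1 * ((N : ℝ) + (n + 1)) - ((N : ℝ) + n) * 1) = 1 := by ring
        rw [hnum]
        apply one_div_le_one_div_of_le
        · positivity
        · nlinarith
      push_cast at ih hstep ⊢
      linarith
  have h := key n
  have : (0:ℝ) < (N : ℝ) + n := by positivity
  have h2 : 0 ≤ 1 / ((N : ℝ) + n) := by positivity
  linarith


set_option maxHeartbeats 1000000 in
lemma G_bound (x : ℝ) (ht0 : 0 < 1 - x) (hte : 1 - x < Real.exp (-3)) :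
    ∑' n : ℕ, b n * (1 - x ^ (n + 1)) ≤ 2 * ((1 - x) * Real.log (1 / (1 - x))) := by
  set t : ℝ := 1 - x with htdef
  have hexp1 : Real.exp (-3) < 1 := Real.exp_lt_one_iff.mpr (by norm_num)
  have hx0 : 0 ≤ x := by linarith
  have hx1 : x < 1 := by linarith
  have hL3 : 3 ≤ Real.log (1 / t) := by
    rw [one_div, Real.log_inv]
    have h := Real.log_lt_log ht0 hte
    rw [Real.log_exp] at h
    linarith
  set L := Real.log (1 / t) with hLdef
  have hL0 : 0 < L := by linarith
  set N := Nat.floor (1 / t) with hNdef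
  have h1t : (1:ℝ) ≤ 1 / t := by
    rw [le_div_iff₀ ht0]; linarith
  have hN1 : 1 ≤ N := Nat.le_floor (by exact_mod_cast h1t)
  have hN0 : (0:ℝ) < N := by exact_mod_cast hN1
  have hN1' : (1:ℝ) ≤ N := by exact_mod_cast hN1
  have hNle : (N : ℝ) ≤ 1 / t := Nat.floor_le (by positivity)
  have hNgt : 1 / t < N + 1 := Nat.lt_floor_add_one _
  have hinvN : 1 / (N : ℝ) ≤ 2 * t := by
    have h2 : 1 / t ≤ 2 * N := by linarith
    have h3 : 1 ≤ 2 * (N : ℝ) * t := by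
      have := (div_le_iff₀ ht0).mp h2
      linarith
    rw [div_le_iff₀ hN0]
    nlinarith
  have hlogN : Real.log N ≤ L := by
    rw [hLdef]
    exact Real.log_le_log hN0 hNle
  have hsum := summable_G x hx0 hx1.le
  have hsplit := (Summable.sum_add_tsum_nat_add (f := fun n : ℕ => b n * (1 - x ^ (n + 1))) N hsum).symm
  rw [hsplit]
  have hhead : ∑ m ∈ Finset.range N, b m * (1 - x ^ (m + 1)) ≤ t * (1 + L) := by
    have h1 : ∑ m ∈ Finset.range N, b m * (1 - x ^ (m + 1))
        ≤ ∑ m ∈ Finset.range N, t * (1 / ((m : ℝ) + 1)) := by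
      refine Finset.sum_le_sum fun m _ => ?_
      have hb1 := b_le m
      have hb0 := b_nonneg m
      have hp1 := one_sub_pow_le x hx0 hx1.le (m + 1)
      have hp0 : 0 ≤ 1 - x ^ (m + 1) := by
        have := pow_le_one₀ hx0 hx1.le (n := m + 1); linarith
      have hm0 : (0:ℝ) < (m : ℝ) + 1 := by positivity
      have hcast : ((m + 1 : ℕ) : ℝ) = (m : ℝ) + 1 := by push_cast; ring
      rw [hcast] at hp1
      calc b m * (1 - x ^ (m + 1)) ≤ (1 / ((m : ℝ) + 1) ^ 2) * (((m : ℝ) + 1) * t) := by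
            apply mul_le_mul hb1 hp1 hp0 (by positivity)
        _ = t * (1 / ((m : ℝ) + 1)) := by field_simp
    calc ∑ m ∈ Finset.range N, b m * (1 - x ^ (m + 1))
        ≤ ∑ m ∈ Finset.range N, t * (1 / ((m : ℝ) + 1)) := h1
      _ = t * ∑ m ∈ Finset.range N, 1 / ((m : ℝ) + 1) := by rw [Finset.mul_sum]
      _ ≤ t * (1 + Real.log N) := mul_le_mul_of_nonneg_left (harmonic_sum_le N) ht0.le
      _ ≤ t * (1 + L) := mul_le_mul_of_nonneg_left (by linarith) ht0.le
  have htail : ∑' i : ℕ, b (i + N) * (1 - x ^ (i + N + 1)) ≤ 2 * t := by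
    have hs1 : Summable (fun i : ℕ => b (i + N) * (1 - x ^ (i + N + 1))) :=
      (summable_nat_add_iff N).mpr hsum
    have hs2 : Summable (fun i : ℕ => 1 / (((i + N : ℕ) : ℝ) + 1) ^ 2) :=
      (summable_nat_add_iff N).mpr summable_inv_sq
    have h1 : ∑' i : ℕ, b (i + N) * (1 - x ^ (i + N + 1))
        ≤ ∑' i : ℕ, 1 / (((i + N : ℕ) : ℝ) + 1) ^ 2 := by
      refine Summable.tsum_le_tsum (fun i => ?_) hs1 hs2
      have hb1 := b_le (i + N)
      have hb0 := b_nonneg (i + N)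
      have hp0 : 0 ≤ x ^ (i + N + 1) := pow_nonneg hx0 _
      nlinarith
    have h2 := tail_sq N hN1
    linarith
  linarith [hL3, ht0, hhead, htail,
    mul_le_mul_of_nonneg_left hL3 ht0.le]

end ExpGenAux

open ExpGenAux in
/-- Let `C = −1 + ∑_{k=2}^∞ ζ(k)/k!`.  Then, as `z → −1⁺` with `z ∈ (−1, 0)` real,
`∑_{n≥1} e^{1/n}(−z)^n = 1/(1+z) + log(1/(1+z)) + C + O((1+z)·log(1/(1+z)))`. -/
theorem exp_inv_genfun_at_minus_one
    (C : ℂ)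
    (hC : C = -1 + ∑' k : ℕ, riemannZeta ((k : ℂ) + 2) / ((k + 2).factorial : ℂ)) :
    (fun z : ℝ =>
        (∑' n : ℕ, ((Real.exp (1 / ((n : ℝ) + 1)) : ℝ) : ℂ) * (-(z : ℂ)) ^ (n + 1)) -
          (1 / (1 + (z : ℂ)) + ((Real.log (1 / (1 + z)) : ℝ) : ℂ) + C))
      =O[nhdsWithin (-1 : ℝ) (Set.Ioo (-1) 0)]
        fun z : ℝ => (1 + z) * Real.log (1 / (1 + z)) := by
  rw [isBigO_iff]
  refine ⟨2, ?_⟩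
  rw [eventually_nhdsWithin_iff, Metric.eventually_nhds_iff]
  refine ⟨Real.exp (-3), Real.exp_pos _, fun z hz hz' => ?_⟩
  obtain ⟨hz1, hz0⟩ := hz'
  set x : ℝ := -z with hxdef
  have hx0 : 0 ≤ x := by rw [hxdef]; linarith
  have hx1 : x < 1 := by rw [hxdef]; linarith
  have ht0 : 0 < 1 - x := by linarith
  have hte : 1 - x < Real.exp (-3) := by
    have hd : dist z (-1) = 1 - x := by
      rw [Real.dist_eq, abs_of_pos (by linarith : (0:ℝ) < z - (-1))]
      rw [hxdef]; ring
    rw [← hd]; exact hz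
  have hxz : (1 : ℝ) + z = 1 - x := by rw [hxdef]; ring
  have hG0 : 0 ≤ ∑' n : ℕ, b n * (1 - x ^ (n + 1)) :=
    tsum_nonneg fun n => mul_nonneg (b_nonneg n)
      (by nlinarith [pow_le_one₀ hx0 hx1.le (n := n + 1)])
  have hGb := G_bound x ht0 hte
  have hkey := key x hx0 hx1
  have hmain : (∑' n : ℕ, ((Real.exp (1 / ((n : ℝ) + 1)) : ℝ) : ℂ) * (-(z : ℂ)) ^ (n + 1)) -
          (1 / (1 + (z : ℂ)) + ((Real.log (1 / (1 + z)) : ℝ) : ℂ) + C)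
      = ((((∑' n : ℕ, Real.exp (1 / ((n : ℝ) + 1)) * x ^ (n + 1))
          - (1 / (1 - x) + Real.log (1 / (1 - x)) + (-1 + B))) : ℝ) : ℂ) := by
    have e1 : (∑' n : ℕ, ((Real.exp (1 / ((n : ℝ) + 1)) : ℝ) : ℂ) * (-(z : ℂ)) ^ (n + 1))
        = (((∑' n : ℕ, Real.exp (1 / ((n : ℝ) + 1)) * x ^ (n + 1)) : ℝ) : ℂ) := by
      rw [Complex.ofReal_tsum]
      congr 1
      funext n
      have hzz : -(z : ℂ) = ((x : ℝ) : ℂ) := by rw [hxdef]; push_cast; ring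
      rw [hzz]
      push_cast
      ring
    have e2 : (1 : ℂ) + (z : ℂ) = ((1 - x : ℝ) : ℂ) := by rw [hxdef]; push_cast; ring
    rw [e1, e2, hxz, C_eq C hC]
    push_cast
    ring
  rw [hmain, hkey]
  have hnorm1 : ‖((-(∑' n : ℕ, b n * (1 - x ^ (n + 1))) : ℝ) : ℂ)‖
      = ∑' n : ℕ, b n * (1 - x ^ (n + 1)) := by
    rw [Complex.norm_real, Real.norm_eq_abs, abs_neg, abs_of_nonneg hG0]
  rw [hnorm1, hxz, Real.norm_eq_abs]
  calc ∑' n : ℕ, b n * (1 - x ^ (n + 1)) ≤ 2 * ((1 - x) * Real.log (1 / (1 - x))) := hGb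
    _ ≤ 2 * |(1 - x) * Real.log (1 / (1 - x))| := by
        have := le_abs_self ((1 - x) * Real.log (1 / (1 - x)))
        linarith
end

section
/- Let c < 0 and 0 < θ < 1 be real numbers. For each k ∈ ℕ the series u_k := (−1)^k·∑_{n=1}^∞ C(n,k)·e^{c n^θ} converges, and for every K ∈ ℕ, as z → −1⁺ with z real in (−1, 0), ∑_{n=1}^∞ e^{c n^θ}·(−z)^n − ∑_{k=0}^{K−1} u_k·(1+z)^k = O((1+z)^K). That is, u₀ + u₁(1+z) + u₂(1+z)² + ⋯ is an asymptotic series for ∑_{n≥1} e^{c n^θ}(−z)^n as z → −1⁺. -/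
open Filter Asymptotics

lemma pascal_sum (w : ℝ) (m K : ℕ) :
    (∑ k ∈ Finset.range (K+1), (((m+1).choose k : ℝ)) * (-w)^k)
    = (∑ k ∈ Finset.range (K+1), ((m.choose k : ℝ)) * (-w)^k)
      + (-w) * ∑ k ∈ Finset.range K, ((m.choose k : ℝ)) * (-w)^k := by
  rw [Finset.sum_range_succ' (fun k => (((m+1).choose k : ℝ)) * (-w)^k) K,
      Finset.sum_range_succ' (fun k => ((m.choose k : ℝ)) * (-w)^k) K, Finset.mul_sum]
  simp only [Nat.choose_succ_succ, Nat.cast_add, add_mul, Finset.sum_add_distrib]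
  have h : ∑ i ∈ Finset.range K, (m.choose i : ℝ) * (-w)^(i+1)
      = ∑ i ∈ Finset.range K, -w * ((m.choose i : ℝ) * (-w)^i) :=
    Finset.sum_congr rfl (fun i _ => by ring)
  rw [h]
  simp only [Nat.succ_eq_add_one, Nat.choose_zero_right, Nat.cast_one]
  ring

lemma remainder_bound (w : ℝ) (hw0 : 0 ≤ w) (hw1 : w ≤ 1) (m : ℕ) : ∀ K : ℕ,
      0 ≤ (-1 : ℝ) ^ K * ((1 - w) ^ m - ∑ k ∈ Finset.range K, (m.choose k : ℝ) * (-w) ^ k) ∧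
      (-1 : ℝ) ^ K * ((1 - w) ^ m - ∑ k ∈ Finset.range K, (m.choose k : ℝ) * (-w) ^ k)
        ≤ (m.choose K : ℝ) * w ^ K := by
  induction m with
  | zero =>
    intro K
    cases K with
    | zero => simp
    | succ K =>
      have hs : (∑ k ∈ Finset.range (K+1), ((Nat.choose 0 k : ℝ)) * (-w)^k) = 1 := by
        rw [Finset.sum_eq_single_of_mem 0 (by simp)]
        · simp
        · intro b _ hb
          rw [Nat.choose_eq_zero_of_lt (Nat.pos_of_ne_zero hb)]
          simp
      simp [hs]
  | succ m ih =>
    intro K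
    cases K with
    | zero =>
      constructor
      · simpa using pow_nonneg (by linarith) (m+1)
      · simpa using pow_le_one₀ (by linarith) (by linarith)
    | succ K =>
      have key : (1 - w) ^ (m+1) - ∑ k ∈ Finset.range (K+1), ((m+1).choose k : ℝ) * (-w) ^ k
          = ((1 - w) ^ m - ∑ k ∈ Finset.range (K+1), (m.choose k : ℝ) * (-w) ^ k)
            - w * ((1 - w) ^ m - ∑ k ∈ Finset.range K, (m.choose k : ℝ) * (-w) ^ k) := by
        rw [pascal_sum]; ring
      have h1 := ih (K+1)
      have h2 := ih K
      constructor
      · rw [key]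
        have : (-1:ℝ)^(K+1) * (((1 - w) ^ m - ∑ k ∈ Finset.range (K+1), (m.choose k : ℝ) * (-w) ^ k)
            - w * ((1 - w) ^ m - ∑ k ∈ Finset.range K, (m.choose k : ℝ) * (-w) ^ k))
          = (-1:ℝ)^(K+1) * ((1 - w) ^ m - ∑ k ∈ Finset.range (K+1), (m.choose k : ℝ) * (-w) ^ k)
            + w * ((-1:ℝ)^K * ((1 - w) ^ m - ∑ k ∈ Finset.range K, (m.choose k : ℝ) * (-w) ^ k)) := by
          ring
        rw [this]
        have := mul_nonneg hw0 h2.1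
        linarith [h1.1]
      · rw [key]
        have e : (-1:ℝ)^(K+1) * (((1 - w) ^ m - ∑ k ∈ Finset.range (K+1), (m.choose k : ℝ) * (-w) ^ k)
            - w * ((1 - w) ^ m - ∑ k ∈ Finset.range K, (m.choose k : ℝ) * (-w) ^ k))
          = (-1:ℝ)^(K+1) * ((1 - w) ^ m - ∑ k ∈ Finset.range (K+1), (m.choose k : ℝ) * (-w) ^ k)
            + w * ((-1:ℝ)^K * ((1 - w) ^ m - ∑ k ∈ Finset.range K, (m.choose k : ℝ) * (-w) ^ k)) := by
          ring
        rw [e]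
        have hb2 : w * ((-1:ℝ)^K * ((1 - w) ^ m - ∑ k ∈ Finset.range K, (m.choose k : ℝ) * (-w) ^ k))
            ≤ w * ((m.choose K : ℝ) * w ^ K) := mul_le_mul_of_nonneg_left h2.2 hw0
        have : ((m+1).choose (K+1) : ℝ) * w^(K+1) = (m.choose (K+1) : ℝ) * w^(K+1) + w * ((m.choose K : ℝ) * w ^ K) := by
          rw [Nat.choose_succ_succ']
          push_cast
          ring
        rw [this]
        have hw' : (m.choose (K+1) : ℝ) * w^(K+1) ≥ (-1:ℝ)^(K+1) * ((1 - w) ^ m - ∑ k ∈ Finset.range (K+1), (m.choose k : ℝ) * (-w) ^ k) := h1.2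
        linarith

open Filter Asymptotics

lemma summable_aux (c θ : ℝ) (hc : c < 0) (hθ0 : 0 < θ) (k : ℕ) :
    Summable (fun n : ℕ => ((n : ℝ) + 1) ^ k * Real.exp (c * ((n : ℝ) + 1) ^ θ)) := by
  have hg : Summable (fun n : ℕ => 1 / ((n : ℝ) + 1) ^ 2) := by
    have h0 : Summable (fun n : ℕ => 1 / ((n : ℝ)) ^ 2) :=
      Real.summable_one_div_nat_pow.2 one_lt_two
    have := (summable_nat_add_iff 1).2 h0
    simpa using this
  apply summable_of_isBigO_nat hg
  rw [isBigO_iff]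
  refine ⟨1, ?_⟩
  have hlog : ∀ᶠ x : ℝ in atTop, ((k : ℝ) + 2) * Real.log x ≤ (-c) * x ^ θ := by
    have h1 := ((isLittleO_log_rpow_atTop hθ0).const_mul_left ((k : ℝ) + 2)).bound
      (neg_pos.2 hc)
    filter_upwards [h1, eventually_ge_atTop (1 : ℝ)] with x hx hx1
    have hlx : 0 ≤ Real.log x := Real.log_nonneg hx1
    have hxθ : 0 ≤ x ^ θ := Real.rpow_nonneg (by linarith) θ
    calc ((k : ℝ) + 2) * Real.log x ≤ ‖((k : ℝ) + 2) * Real.log x‖ := le_abs_self _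
      _ ≤ (-c) * ‖x ^ θ‖ := hx
      _ = (-c) * x ^ θ := by rw [Real.norm_eq_abs, abs_of_nonneg hxθ]
  have htend : Tendsto (fun n : ℕ => ((n : ℝ) + 1)) atTop atTop :=
    tendsto_atTop_add_const_right atTop 1 tendsto_natCast_atTop_atTop
  filter_upwards [htend.eventually hlog, htend.eventually (eventually_ge_atTop (1 : ℝ))]
    with n hn hn1
  set x : ℝ := (n : ℝ) + 1 with hxdef
  have hx0 : (0 : ℝ) < x := by linarith
  have hexp : x ^ (k + 2) * Real.exp (c * x ^ θ) ≤ 1 := by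
    have hxpow : x ^ (k + 2) = Real.exp (((k : ℝ) + 2) * Real.log x) := by
      rw [show ((k : ℝ) + 2) = ((k + 2 : ℕ) : ℝ) by push_cast; ring, ← Real.log_pow,
        Real.exp_log (pow_pos hx0 _)]
    rw [hxpow, ← Real.exp_add]
    have : ((k : ℝ) + 2) * Real.log x + c * x ^ θ ≤ 0 := by linarith
    calc Real.exp _ ≤ Real.exp 0 := Real.exp_le_exp.2 this
      _ = 1 := Real.exp_zero
  have hfg : x ^ k * Real.exp (c * x ^ θ) ≤ 1 / x ^ 2 := by
    rw [le_div_iff₀ (by positivity)]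
    calc x ^ k * Real.exp (c * x ^ θ) * x ^ 2 = x ^ (k + 2) * Real.exp (c * x ^ θ) := by ring
      _ ≤ 1 := hexp
  have hf0 : 0 ≤ x ^ k * Real.exp (c * x ^ θ) := by positivity
  rw [Real.norm_eq_abs, Real.norm_eq_abs, abs_of_nonneg hf0, abs_of_nonneg (by positivity)]
  linarith

lemma main_aux (a : ℕ → ℝ) (ha0 : ∀ n, 0 < a n) (ha1 : ∀ n, a n ≤ 1)
    (hsum : ∀ k : ℕ, Summable (fun n : ℕ => ((n + 1).choose k : ℝ) * a n))
    (u : ℕ → ℝ) (hu : ∀ k, u k = (-1 : ℝ) ^ k * ∑' n : ℕ, ((n + 1).choose k : ℝ) * a n)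
    (K : ℕ) :
    (fun z : ℝ => (∑' n : ℕ, a n * (-z) ^ (n + 1)) - ∑ k ∈ Finset.range K, u k * (1 + z) ^ k)
      =O[nhdsWithin (-1 : ℝ) (Set.Ioo (-1) 0)] fun z : ℝ => (1 + z) ^ K := by
  set S : ℝ := ∑' n : ℕ, ((n + 1).choose K : ℝ) * a n with hS
  rw [isBigO_iff]
  refine ⟨S, ?_⟩
  filter_upwards [self_mem_nhdsWithin] with z hz
  obtain ⟨hz1, hz0⟩ := hz
  set w : ℝ := 1 + z with hw
  have hw0 : 0 < w := by simp only [hw]; linarith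
  have hw1 : w < 1 := by simp only [hw]; linarith
  have hz' : (0 : ℝ) < -z := by linarith
  have hzw : -z = 1 - w := by simp only [hw]; ring
  have hsum1 : Summable (fun n : ℕ => a n * (-z) ^ (n + 1)) := by
    apply (summable_geometric_of_lt_one hz'.le (by linarith : -z < 1)).of_nonneg_of_le
      (fun n => mul_nonneg (ha0 n).le (pow_pos hz' _).le)
    intro n
    calc a n * (-z) ^ (n + 1) ≤ 1 * (-z) ^ (n + 1) :=
          mul_le_mul_of_nonneg_right (ha1 n) (pow_pos hz' _).le
      _ = (-z) ^ n * (-z) := by ring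
      _ ≤ (-z) ^ n * 1 := mul_le_mul_of_nonneg_left (by linarith) (pow_pos hz' _).le
      _ = (-z) ^ n := mul_one _
  have hsumk : ∀ k : ℕ, Summable (fun n : ℕ => ((n + 1).choose k : ℝ) * a n * (-w) ^ k) :=
    fun k => (hsum k).mul_right _
  have hP : ∑ k ∈ Finset.range K, u k * w ^ k
      = ∑' n : ℕ, ∑ k ∈ Finset.range K, ((n + 1).choose k : ℝ) * a n * (-w) ^ k := by
    rw [Summable.tsum_finsetSum (fun k _ => hsumk k)]
    apply Finset.sum_congr rfl
    intro k _
    rw [hu k]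
    have h1 : ∑' n : ℕ, ((n + 1).choose k : ℝ) * a n * (-w) ^ k
        = (∑' n : ℕ, ((n + 1).choose k : ℝ) * a n) * ((-1 : ℝ) ^ k * w ^ k) := by
      rw [← tsum_mul_right]
      exact tsum_congr fun n => by rw [neg_pow]
    rw [h1]
    ring
  rw [hP]
  have hdiff : (∑' n : ℕ, a n * (-z) ^ (n + 1))
      - (∑' n : ℕ, ∑ k ∈ Finset.range K, ((n + 1).choose k : ℝ) * a n * (-w) ^ k)
      = ∑' n : ℕ, a n * ((1 - w) ^ (n + 1)
          - ∑ k ∈ Finset.range K, ((n + 1).choose k : ℝ) * (-w) ^ k) := by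
    rw [← Summable.tsum_sub hsum1 (summable_sum (fun k _ => hsumk k))]
    apply tsum_congr
    intro n
    rw [hzw, mul_sub, Finset.mul_sum]
    congr 1
    exact Finset.sum_congr rfl fun k _ => by ring
  rw [hdiff]
  have hterm : ∀ n : ℕ,
      ‖a n * ((1 - w) ^ (n + 1) - ∑ k ∈ Finset.range K, ((n + 1).choose k : ℝ) * (-w) ^ k)‖
      ≤ ((n + 1).choose K : ℝ) * a n * w ^ K := by
    intro n
    obtain ⟨hb1, hb2⟩ := remainder_bound w hw0.le hw1.le (n + 1) K
    have hCw : (0 : ℝ) ≤ ((n + 1).choose K : ℝ) * w ^ K := by positivity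
    have habs : |(1 - w) ^ (n + 1) - ∑ k ∈ Finset.range K, ((n + 1).choose k : ℝ) * (-w) ^ k|
        ≤ ((n + 1).choose K : ℝ) * w ^ K := by
      rw [abs_le]
      rcases Nat.even_or_odd K with hK | hK
      · rw [hK.neg_one_pow, one_mul] at hb1 hb2
        exact ⟨by linarith, by linarith⟩
      · rw [hK.neg_one_pow, neg_one_mul] at hb1 hb2
        exact ⟨by linarith, by linarith⟩
    rw [norm_mul, Real.norm_eq_abs, Real.norm_eq_abs, abs_of_pos (ha0 n)]
    calc a n * |(1 - w) ^ (n + 1) - ∑ k ∈ Finset.range K, ((n + 1).choose k : ℝ) * (-w) ^ k|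
        ≤ a n * (((n + 1).choose K : ℝ) * w ^ K) :=
          mul_le_mul_of_nonneg_left habs (ha0 n).le
      _ = ((n + 1).choose K : ℝ) * a n * w ^ K := by ring
  have hbsum : Summable (fun n : ℕ => ((n + 1).choose K : ℝ) * a n * w ^ K) :=
    (hsum K).mul_right _
  have hnorm : Summable (fun n : ℕ =>
      ‖a n * ((1 - w) ^ (n + 1) - ∑ k ∈ Finset.range K, ((n + 1).choose k : ℝ) * (-w) ^ k)‖) :=
    hbsum.of_nonneg_of_le (fun n => norm_nonneg _) hterm
  calc ‖∑' n : ℕ, a n * ((1 - w) ^ (n + 1)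
          - ∑ k ∈ Finset.range K, ((n + 1).choose k : ℝ) * (-w) ^ k)‖
      ≤ ∑' n : ℕ, ‖a n * ((1 - w) ^ (n + 1)
          - ∑ k ∈ Finset.range K, ((n + 1).choose k : ℝ) * (-w) ^ k)‖ :=
        norm_tsum_le_tsum_norm hnorm
    _ ≤ ∑' n : ℕ, ((n + 1).choose K : ℝ) * a n * w ^ K := Summable.tsum_le_tsum hterm hnorm hbsum
    _ = S * w ^ K := by rw [tsum_mul_right]
    _ ≤ S * ‖w ^ K‖ := by
        rw [Real.norm_eq_abs, abs_pow, abs_of_pos hw0]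

/-- Let `c < 0` and `0 < θ < 1`.  For each `k ∈ ℕ`, the series
`u_k = (−1)^k ∑_{n≥1} C(n,k) e^{c n^θ}` converges, and for every `K ∈ ℕ`, as `z → −1⁺`
with `z ∈ (−1, 0)` real,
`∑_{n≥1} e^{c n^θ}(−z)^n − ∑_{k=0}^{K−1} u_k (1+z)^k = O((1+z)^K)`; that is,
`u₀ + u₁(1+z) + u₂(1+z)² + ⋯` is an asymptotic series for `∑_{n≥1} e^{c n^θ}(−z)^n`. -/
theorem genExp_at_minus_one_c_neg
    (c θ : ℝ) (hc : c < 0) (hθ0 : 0 < θ) (hθ1 : θ < 1)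
    (u : ℕ → ℝ)
    (hu : ∀ k : ℕ, u k = (-1 : ℝ) ^ k *
      ∑' n : ℕ, ((n + 1).choose k : ℝ) * Real.exp (c * ((n : ℝ) + 1) ^ θ)) :
    (∀ k : ℕ, Summable (fun n : ℕ =>
        ((n + 1).choose k : ℝ) * Real.exp (c * ((n : ℝ) + 1) ^ θ))) ∧
    ∀ K : ℕ,
      (fun z : ℝ =>
          (∑' n : ℕ, Real.exp (c * ((n : ℝ) + 1) ^ θ) * (-z) ^ (n + 1)) -
            ∑ k ∈ Finset.range K, u k * (1 + z) ^ k)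
        =O[nhdsWithin (-1 : ℝ) (Set.Ioo (-1) 0)] fun z : ℝ => (1 + z) ^ K := by
  have hsum : ∀ k : ℕ, Summable (fun n : ℕ =>
      ((n + 1).choose k : ℝ) * Real.exp (c * ((n : ℝ) + 1) ^ θ)) := by
    intro k
    apply (summable_aux c θ hc hθ0 k).of_nonneg_of_le (fun n => by positivity)
    intro n
    apply mul_le_mul_of_nonneg_right _ (Real.exp_pos _).le
    calc ((n + 1).choose k : ℝ) ≤ (((n + 1) ^ k : ℕ) : ℝ) := by
          exact_mod_cast Nat.choose_le_pow (n + 1) k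
      _ = ((n : ℝ) + 1) ^ k := by push_cast; ring
  refine ⟨hsum, fun K => ?_⟩
  exact main_aux (fun n => Real.exp (c * ((n : ℝ) + 1) ^ θ)) (fun n => Real.exp_pos _)
    (fun n => Real.exp_le_one_iff.2 (mul_nonpos_of_nonpos_of_nonneg hc.le
      (Real.rpow_nonneg (by positivity) θ)))
    hsum u hu K
end
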